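/- arXiv:1703.08872 — 10 statements merged into one kernel-verified Lean document; each statement's English description precedes it below -/
import Mathlib

section
/- If Σ_{k ∈ ℕ^d} ∏_{j=1}^d e_j(k_j) < ∞, then every M ∈ E_e(Y) converges to a limit M_∞ ∈ Y as min_{1≤j≤d} k_j → ∞ (i.e., along the filter of indices whose minimal coordinate tends to infinity), the family ((Δ_mix M)(k))_{k ∈ ℕ^d} is absolutely summable, and M_∞ = Σ_{k ∈ ℕ^d} (Δ_mix M)(k). -/
/-- The `j`-th unidirectional difference operator:
`(Δ_j M)(k) = M(k) - M(k - e_j)` if `k j > 0`, and `(Δ_j M)(k) = M(k)` if `k j = 0`. -/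
def diffOp {d : ℕ} {Y : Type*} [AddCommGroup Y] (j : Fin d) (M : (Fin d → ℕ) → Y) :
    (Fin d → ℕ) → Y :=
  fun k => if k j = 0 then M k else M k - M (Function.update k j (k j - 1))

/-- The mixed difference operator `Δ_mix = Δ_1 ∘ ⋯ ∘ Δ_d`. -/
def mixDiff {d : ℕ} {Y : Type*} [AddCommGroup Y] (M : (Fin d → ℕ) → Y) :
    (Fin d → ℕ) → Y :=
  (List.finRange d).foldr (fun j F => diffOp j F) M

/-- The space `E_e(Y)` of approximation methods whose mixed differences decay
like `K₁ ∏_j e_j(k_j)` for some `K₁ > 0`. -/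
def Espace {d : ℕ} {Y : Type*} [NormedAddCommGroup Y] (e : Fin d → ℕ → ℝ) :
    Set ((Fin d → ℕ) → Y) :=
  {M | ∃ K₁ > (0 : ℝ), ∀ k : Fin d → ℕ, ‖mixDiff M k‖ ≤ K₁ * ∏ j, e j (k j)}

/-- The `j`-th unidirectional summation operator. -/
def sumOp {d : ℕ} {Y : Type*} [AddCommGroup Y] (j : Fin d) (F : (Fin d → ℕ) → Y) :
    (Fin d → ℕ) → Y :=
  fun k => ∑ m ∈ Finset.Iic (k j), F (Function.update k j m)

lemma sumOp_diffOp_aux {d : ℕ} {Y : Type*} [AddCommGroup Y] (j : Fin d)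
    (F : (Fin d → ℕ) → Y) (n : ℕ) :
    ∀ k : Fin d → ℕ, ∑ m ∈ Finset.Iic n, diffOp j F (Function.update k j m)
      = F (Function.update k j n) := by
  induction n with
  | zero =>
      intro k
      have h0 : Finset.Iic 0 = ({0} : Finset ℕ) := rfl
      simp [h0, diffOp]
  | succ n ih =>
      intro k
      have h1 : Finset.Iic (n + 1) = insert (n + 1) (Finset.Iic n) := by
        ext x; simp [Nat.lt_succ_iff, Nat.le_succ_iff]; omega
      rw [h1, Finset.sum_insert (by simp), ih k]
      have h2 : diffOp j F (Function.update k j (n + 1))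
          = F (Function.update k j (n + 1)) - F (Function.update k j n) := by
        simp only [diffOp, Function.update_self]
        rw [if_neg (Nat.succ_ne_zero n)]
        rw [Function.update_idem]
        norm_num
      rw [h2]; abel

lemma sumOp_diffOp {d : ℕ} {Y : Type*} [AddCommGroup Y] (j : Fin d)
    (F : (Fin d → ℕ) → Y) : sumOp j (diffOp j F) = F := by
  funext k
  have := sumOp_diffOp_aux j F (k j) k
  rwa [Function.update_eq_self] at this

lemma sumOp_diffOp_comm {d : ℕ} {Y : Type*} [AddCommGroup Y] {i j : Fin d} (hij : i ≠ j)
    (F : (Fin d → ℕ) → Y) : sumOp j (diffOp i F) = diffOp i (sumOp j F) := by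
  funext k
  simp only [sumOp, diffOp, Function.update_of_ne hij, Function.update_of_ne (Ne.symm hij)]
  by_cases h : k i = 0
  · simp [h]
  · simp only [if_neg h, Finset.sum_sub_distrib]
    congr 1
    refine Finset.sum_congr rfl fun m _ => ?_
    rw [Function.update_comm hij.symm]

/-- Folded sum operator commutes with `diffOp j` when `j` is not in the list. -/
lemma foldr_sumOp_diffOp_comm {d : ℕ} {Y : Type*} [AddCommGroup Y] (L : List (Fin d))
    {j : Fin d} (hj : j ∉ L) (F : (Fin d → ℕ) → Y) :
    L.foldr (fun i G => sumOp i G) (diffOp j F)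
      = diffOp j (L.foldr (fun i G => sumOp i G) F) := by
  induction L with
  | nil => rfl
  | cons i L ih =>
      simp only [List.foldr_cons]
      rw [ih (fun h => hj (List.mem_cons_of_mem _ h)),
        sumOp_diffOp_comm (by intro h; subst h; exact hj (List.mem_cons_self))]

/-- Folded sum operator inverts folded difference operator for a nodup list. -/
lemma foldr_sumOp_foldr_diffOp {d : ℕ} {Y : Type*} [AddCommGroup Y] (L : List (Fin d))
    (hL : L.Nodup) (F : (Fin d → ℕ) → Y) :
    L.foldr (fun i G => sumOp i G) (L.foldr (fun i G => diffOp i G) F) = F := by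
  induction L with
  | nil => rfl
  | cons j L ih =>
      have hnd := List.nodup_cons.mp hL
      simp only [List.foldr_cons]
      rw [foldr_sumOp_diffOp_comm L hnd.1, ih hnd.2, sumOp_diffOp]

/-- The folded sum operator is a sum over a box given by a `piFinset`. -/
lemma foldr_sumOp_eq_sum {d : ℕ} {Y : Type*} [AddCommGroup Y] (L : List (Fin d))
    (hL : L.Nodup) (F : (Fin d → ℕ) → Y) (k : Fin d → ℕ) :
    L.foldr (fun i G => sumOp i G) F k
      = ∑ l ∈ Fintype.piFinset (fun i => if i ∈ L then Finset.Iic (k i) else {k i}), F l := by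
  induction L generalizing k with
  | nil =>
      have : Fintype.piFinset (fun i : Fin d => if i ∈ ([] : List (Fin d))
          then Finset.Iic (k i) else {k i}) = {k} := by
        ext l
        simp only [Fintype.mem_piFinset, List.not_mem_nil, if_false, Finset.mem_singleton,
          funext_iff]
      rw [this, Finset.sum_singleton]
      rfl
  | cons j L ih =>
      have hnd := List.nodup_cons.mp hL
      have key : Fintype.piFinset (fun i => if i ∈ j :: L then Finset.Iic (k i) else {k i})
          = (Finset.Iic (k j)).biUnion (fun m =>
              Fintype.piFinset (fun i => if i ∈ L then Finset.Iic (Function.update k j m i)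
                else {Function.update k j m i})) := by
        ext l
        simp only [Fintype.mem_piFinset, Finset.mem_biUnion, Finset.mem_Iic, List.mem_cons]
        constructor
        · intro h
          refine ⟨l j, ?_, fun i => ?_⟩
          · simpa using h j
          · by_cases hi : i = j
            · subst hi
              simp [hnd.1]
            · have := h i
              simp only [hi, false_or] at this
              rw [Function.update_of_ne hi]
              exact this
        · rintro ⟨m, hm, h⟩ i
          by_cases hi : i = j
          · subst hi
            have := h i
            simp only [hnd.1, if_false, Function.update_self, Finset.mem_singleton] at this
            simp [this, hm]
          · have := h i
            rw [Function.update_of_ne hi] at this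
            simp only [hi, false_or]
            exact this
      have hdisj : (↑(Finset.Iic (k j)) : Set ℕ).PairwiseDisjoint (fun m =>
          Fintype.piFinset (fun i => if i ∈ L then Finset.Iic (Function.update k j m i)
            else {Function.update k j m i})) := by
        intro a _ b _ hab
        refine Finset.disjoint_left.mpr ?_
        intro l hla hlb
        simp only [Fintype.mem_piFinset] at hla hlb
        have h1 := hla j
        have h2 := hlb j
        rw [if_neg hnd.1, Function.update_self, Finset.mem_singleton] at h1 h2
        exact hab (h1 ▸ h2)
      simp only [List.foldr_cons]
      show sumOp j (L.foldr (fun i G => sumOp i G) F) k = _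
      rw [key, Finset.sum_biUnion hdisj]
      simp only [sumOp]
      exact Finset.sum_congr rfl fun m _ => ih hnd.2 (Function.update k j m)

/-- The key telescoping identity: `M k` is the sum of the mixed differences over
the box `Iic k`. -/
lemma sum_Iic_mixDiff {d : ℕ} {Y : Type*} [AddCommGroup Y] (M : (Fin d → ℕ) → Y)
    (k : Fin d → ℕ) : ∑ l ∈ Finset.Iic k, mixDiff M l = M k := by
  have h1 : (Finset.Iic k : Finset (Fin d → ℕ))
      = Fintype.piFinset (fun i => if i ∈ List.finRange d then Finset.Iic (k i) else {k i}) := by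
    ext l
    simp [Fintype.mem_piFinset, Finset.mem_Iic, Pi.le_def, List.mem_finRange]
  rw [h1, ← foldr_sumOp_eq_sum _ (List.nodup_finRange d), mixDiff,
    foldr_sumOp_foldr_diffOp _ (List.nodup_finRange d)]

/-- if `∑_{k ∈ ℕ^d} ∏_j e_j(k_j) < ∞`, then every `M ∈ E_e(Y)` has a
limit `M_∞` as `min_j k_j → ∞` (i.e. along `atTop` for the componentwise order),
the family `(Δ_mix M)(k)` is absolutely summable, and `M_∞ = ∑_{k} (Δ_mix M)(k)`. -/
theorem Espace_limit_and_decomposition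
    {d : ℕ} (hd : 1 ≤ d) {Y : Type*} [NormedAddCommGroup Y] [NormedSpace ℝ Y]
    [CompleteSpace Y]
    (e : Fin d → ℕ → ℝ) (hepos : ∀ j i, 0 < e j i) (heanti : ∀ j, StrictAnti (e j))
    (hsum : Summable fun k : Fin d → ℕ => ∏ j, e j (k j))
    (M : (Fin d → ℕ) → Y) (hM : M ∈ Espace e) :
    ∃ Minf : Y,
      Filter.Tendsto M Filter.atTop (nhds Minf) ∧
      (Summable fun k : Fin d → ℕ => ‖mixDiff M k‖) ∧
      HasSum (mixDiff M) Minf := by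
  obtain ⟨K₁, hK₁, hbound⟩ := hM
  have hns : Summable fun k : Fin d → ℕ => ‖mixDiff M k‖ := by
    apply Summable.of_nonneg_of_le (fun k => norm_nonneg _) hbound
    exact hsum.mul_left K₁
  have hs : Summable (mixDiff M) := hns.of_norm
  refine ⟨∑' k, mixDiff M k, ?_, hns, hs.hasSum⟩
  have htendsto : Filter.Tendsto (fun k : Fin d → ℕ => Finset.Iic k)
      Filter.atTop Filter.atTop := by
    apply Filter.tendsto_atTop_finset_of_monotone
    · intro a b hab
      exact Finset.Iic_subset_Iic.mpr hab
    · intro x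
      exact ⟨x, Finset.mem_Iic.mpr le_rfl⟩
  have := (hs.hasSum.comp htendsto : Filter.Tendsto
      ((fun s : Finset (Fin d → ℕ) => ∑ l ∈ s, mixDiff M l) ∘ fun k => Finset.Iic k)
      Filter.atTop (nhds (∑' k, mixDiff M k)))
  refine this.congr ?_
  intro k
  exact sum_Iic_mixDiff M k
end

section
/- (Error expansions) Assume the ratios e_j(k)/e_j(k+1) are uniformly bounded above over k ∈ ℕ and j ∈ {1,…,d}. Suppose M : ℕ^d → Y and M_∞ ∈ Y satisfy M(k) − M_∞ = Σ_{∅ ≠ J ⊆ {1,…,d}} M_J(k_J) for all k ∈ ℕ^d, where k_J := (k_j)_{j∈J}, the M_J : ℕ^{|J|} → Y are functions, and ‖M_J(k_J)‖_Y ≤ ∏_{j∈J} e_j(k_j) for all k and all nonempty J ⊆ {1,…,d}. Then M ∈ E_e(Y), i.e., there exists K₁ > 0 with ‖(Δ_mix M)(k)‖_Y ≤ K₁ ∏_{j=1}^d e_j(k_j) for all k ∈ ℕ^d. -/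
/-- Decrement by one the coordinates of `k` belonging to `S`. -/
def decS {d : ℕ} (k : Fin d → ℕ) (S : Finset (Fin d)) : Fin d → ℕ :=
  fun j => if j ∈ S then k j - 1 else k j

lemma norm_neg_one_pow_zsmul {Y : Type*} [SeminormedAddCommGroup Y] (c : ℕ) (x : Y) :
    ‖((-1 : ℤ) ^ c) • x‖ = ‖x‖ := by
  rcases Nat.even_or_odd c with h | h
  · rw [h.neg_one_pow, one_smul]
  · rw [h.neg_one_pow, neg_one_zsmul, norm_neg]

lemma foldr_diff_formula {d : ℕ} {Y : Type*} [AddCommGroup Y]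
    (N : (Fin d → ℕ) → Y) :
    ∀ (l : List (Fin d)), l.Nodup → ∀ (k : Fin d → ℕ),
    (l.foldr (fun j F => diffOp j F) N) k =
      ∑ S ∈ (Finset.filter (fun j => k j ≠ 0) l.toFinset).powerset,
        (-1 : ℤ) ^ S.card • N (decS k S) := by
  intro l
  induction l with
  | nil =>
    intro _ k
    have hdec : decS k ∅ = k := funext fun j => by simp [decS]
    simp [hdec]
  | cons j t ih =>
    intro hnd k
    have hjt : j ∉ t := (List.nodup_cons.mp hnd).1
    have hndt : t.Nodup := (List.nodup_cons.mp hnd).2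
    show diffOp j (t.foldr (fun j F => diffOp j F) N) k = _
    rw [diffOp]
    by_cases hkj : k j = 0
    · rw [if_pos hkj, ih hndt k, List.toFinset_cons, Finset.filter_insert,
        if_neg (by simp [hkj])]
    · rw [if_neg hkj, ih hndt k, ih hndt (Function.update k j (k j - 1)),
        List.toFinset_cons, Finset.filter_insert, if_pos hkj]
      set A := Finset.filter (fun i => k i ≠ 0) t.toFinset with hA
      have hjA : j ∉ A := fun h => hjt (List.mem_toFinset.mp (Finset.mem_filter.mp h).1)
      have hfilter : Finset.filter (fun i => Function.update k j (k j - 1) i ≠ 0) t.toFinset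
          = A := by
        refine Finset.filter_congr fun i hi => ?_
        have hij : i ≠ j := fun h => hjt (h ▸ List.mem_toFinset.mp hi)
        rw [Function.update_of_ne hij]
      rw [hfilter, Finset.sum_powerset_insert hjA]
      have hterm : ∀ S ∈ A.powerset,
          (-1 : ℤ) ^ (insert j S).card • N (decS k (insert j S))
            = -((-1 : ℤ) ^ S.card • N (decS (Function.update k j (k j - 1)) S)) := by
        intro S hS
        have hjS : j ∉ S := fun h => hjA (Finset.mem_powerset.mp hS h)
        have hdec : decS k (insert j S) = decS (Function.update k j (k j - 1)) S := by
          funext i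
          by_cases hij : i = j
          · subst hij
            simp [decS, hjS, Function.update_self]
          · simp [decS, Finset.mem_insert, hij, Function.update_of_ne hij]
        rw [hdec, Finset.card_insert_of_notMem hjS, pow_succ, mul_comm, neg_one_mul,
          neg_smul]
      rw [Finset.sum_congr rfl hterm, Finset.sum_neg_distrib]
      abel

/-- error expansions: if the ratios `e_j(k)/e_j(k+1)` are uniformly
bounded above, and `M(k) - M_∞ = ∑_{∅ ≠ J ⊆ {1,…,d}} M_J(k_J)` where each `M_J`
depends only on the coordinates in `J` and satisfies `‖M_J(k_J)‖ ≤ ∏_{j∈J} e_j(k_j)`,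
then `M ∈ E_e(Y)`. -/
theorem error_expansion_mem_Espace
    {d : ℕ} (hd : 1 ≤ d) {Y : Type*} [NormedAddCommGroup Y] [NormedSpace ℝ Y]
    [CompleteSpace Y]
    (e : Fin d → ℕ → ℝ) (hepos : ∀ j i, 0 < e j i) (heanti : ∀ j, StrictAnti (e j))
    (R : ℝ) (hR : ∀ (j : Fin d) (i : ℕ), e j i / e j (i + 1) ≤ R)
    (M : (Fin d → ℕ) → Y) (Minf : Y)
    (MJ : Finset (Fin d) → (Fin d → ℕ) → Y)
    (hMJdep : ∀ (J : Finset (Fin d)) (k k' : Fin d → ℕ),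
      (∀ j ∈ J, k j = k' j) → MJ J k = MJ J k')
    (hdecomp : ∀ k : Fin d → ℕ,
      M k - Minf = ∑ J ∈ Finset.univ.powerset.filter (· ≠ (∅ : Finset (Fin d))), MJ J k)
    (hbound : ∀ (J : Finset (Fin d)), J ≠ ∅ → ∀ k : Fin d → ℕ,
      ‖MJ J k‖ ≤ ∏ j ∈ J, e j (k j)) :
    M ∈ Espace e := by
  classical
  set 𝒥 := Finset.univ.powerset.filter (· ≠ (∅ : Finset (Fin d))) with h𝒥
  have hR1 : (1 : ℝ) ≤ R := by
    have j0 : Fin d := ⟨0, hd⟩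
    have h1 := hR j0 0
    have h2 : (1 : ℝ) < e j0 0 / e j0 1 :=
      (one_lt_div (hepos j0 1)).mpr (heanti j0 (by norm_num))
    linarith
  have hRpos : (0 : ℝ) < R := lt_of_lt_of_le one_pos hR1
  have hform : ∀ (N : (Fin d → ℕ) → Y) (k : Fin d → ℕ),
      mixDiff N k = ∑ S ∈ (Finset.filter (fun j => k j ≠ 0) Finset.univ).powerset,
        (-1 : ℤ) ^ S.card • N (decS k S) := by
    intro N k
    have h := foldr_diff_formula N (List.finRange d) (List.nodup_finRange d) k
    simpa [mixDiff, List.toFinset_finRange] using h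
  set P0 : ℝ := ∏ j, e j 0 with hP0
  have hP0pos : 0 < P0 := Finset.prod_pos fun j _ => hepos j 0
  set C : Finset (Fin d) → ℝ := fun J => 2 ^ d * R ^ d / ∏ j ∈ Jᶜ, e j 0 with hC
  have hCnonneg : ∀ J, 0 ≤ C J := by
    intro J
    have h1 : (0 : ℝ) < ∏ j ∈ Jᶜ, e j 0 := Finset.prod_pos fun j _ => hepos j 0
    positivity
  set K₁ : ℝ := ‖Minf‖ / P0 + ∑ J ∈ 𝒥, C J + 1 with hK
  have hKpos : 0 < K₁ := by
    have h1 : 0 ≤ ‖Minf‖ / P0 := div_nonneg (norm_nonneg _) hP0pos.le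
    have h2 : 0 ≤ ∑ J ∈ 𝒥, C J := Finset.sum_nonneg fun J _ => hCnonneg J
    rw [hK]; linarith
  refine ⟨K₁, hKpos, fun k => ?_⟩
  set T := Finset.filter (fun j => k j ≠ 0) Finset.univ with hT
  set Pk : ℝ := ∏ j, e j (k j) with hPk
  have hPkpos : 0 < Pk := Finset.prod_pos fun j _ => hepos j _
  have hMk : ∀ x, M x = Minf + ∑ J ∈ 𝒥, MJ J x := by
    intro x
    have h := hdecomp x
    rw [sub_eq_iff_eq_add] at h
    rw [h, add_comm]
  have key : mixDiff M k = (∑ S ∈ T.powerset, (-1 : ℤ) ^ S.card) • Minf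
      + ∑ J ∈ 𝒥, ∑ S ∈ T.powerset, (-1 : ℤ) ^ S.card • MJ J (decS k S) := by
    rw [hform M k]
    simp_rw [hMk, smul_add, Finset.sum_add_distrib, Finset.smul_sum, Finset.sum_smul]
    rw [Finset.sum_comm]
  rw [key]
  have hterm0 : ‖(∑ S ∈ T.powerset, (-1 : ℤ) ^ S.card) • Minf‖ ≤ ‖Minf‖ / P0 * Pk := by
    rw [Finset.sum_powerset_neg_one_pow_card]
    by_cases hTe : T = ∅
    · rw [if_pos hTe, one_smul]
      have hk0 : ∀ j, k j = 0 := by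
        intro j
        by_contra h
        exact (Finset.eq_empty_iff_forall_notMem.mp hTe j)
          (Finset.mem_filter.mpr ⟨Finset.mem_univ j, h⟩)
      have hPP : Pk = P0 := Finset.prod_congr rfl fun j _ => by rw [hk0 j]
      rw [hPP, div_mul_cancel₀ _ (ne_of_gt hP0pos)]
    · rw [if_neg hTe, zero_smul, norm_zero]
      positivity
  have hAJ : ∀ J ∈ 𝒥,
      ‖∑ S ∈ T.powerset, (-1 : ℤ) ^ S.card • MJ J (decS k S)‖ ≤ C J * Pk := by
    intro J hJ
    have hJne : J ≠ ∅ := (Finset.mem_filter.mp hJ).2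
    by_cases hTJ : T ⊆ J
    · -- bound each term
      have hJc : ∀ j ∈ Jᶜ, k j = 0 := by
        intro j hj
        by_contra h
        exact (Finset.mem_compl.mp hj) (hTJ (Finset.mem_filter.mpr ⟨Finset.mem_univ j, h⟩))
      have hsplit : Pk = (∏ j ∈ J, e j (k j)) * ∏ j ∈ Jᶜ, e j 0 := by
        rw [hPk, ← Finset.prod_mul_prod_compl J]
        congr 1
        exact Finset.prod_congr rfl fun j hj => by rw [hJc j hj]
      have hPJ : ∏ j ∈ J, e j (k j) = Pk / ∏ j ∈ Jᶜ, e j 0 := by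
        have hne : (∏ j ∈ Jᶜ, e j 0) ≠ 0 :=
          ne_of_gt (Finset.prod_pos fun j _ => hepos j 0)
        rw [hsplit, mul_div_cancel_right₀ _ hne]
      have hterm : ∀ S ∈ T.powerset,
          ‖(-1 : ℤ) ^ S.card • MJ J (decS k S)‖ ≤ R ^ d * ∏ j ∈ J, e j (k j) := by
        intro S hS
        rw [norm_neg_one_pow_zsmul]
        refine le_trans (hbound J hJne _) ?_
        have h1 : ∏ j ∈ J, e j (decS k S j) ≤ ∏ j ∈ J, (R * e j (k j)) := by
          refine Finset.prod_le_prod (fun j _ => (hepos j _).le) ?_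
          intro j _
          by_cases hjS : j ∈ S
          · have hkj : k j ≠ 0 :=
              (Finset.mem_filter.mp (Finset.mem_powerset.mp hS hjS)).2
            have hd1 : decS k S j = k j - 1 := by simp [decS, hjS]
            rw [hd1]
            have h2 := hR j (k j - 1)
            rw [Nat.sub_add_cancel (Nat.one_le_iff_ne_zero.mpr hkj)] at h2
            have h3 : 0 < e j (k j) := hepos j _
            calc e j (k j - 1) = e j (k j - 1) / e j (k j) * e j (k j) := by field_simp
              _ ≤ R * e j (k j) := mul_le_mul_of_nonneg_right h2 h3.le
          · have hd1 : decS k S j = k j := by simp [decS, hjS]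
            rw [hd1]
            nlinarith [hepos j (k j)]
        rw [Finset.prod_mul_distrib, Finset.prod_const] at h1
        refine le_trans h1 ?_
        have h4 : (0 : ℝ) ≤ ∏ j ∈ J, e j (k j) :=
          Finset.prod_nonneg fun j _ => (hepos j _).le
        have h5 : R ^ J.card ≤ R ^ d :=
          pow_le_pow_right₀ hR1 (le_trans (Finset.card_le_univ J) (by simp))
        exact mul_le_mul_of_nonneg_right h5 h4
      calc ‖∑ S ∈ T.powerset, (-1 : ℤ) ^ S.card • MJ J (decS k S)‖
          ≤ ∑ S ∈ T.powerset, ‖(-1 : ℤ) ^ S.card • MJ J (decS k S)‖ :=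
            norm_sum_le _ _
        _ ≤ ∑ _S ∈ T.powerset, R ^ d * ∏ j ∈ J, e j (k j) :=
            Finset.sum_le_sum hterm
        _ = (T.powerset.card : ℝ) * (R ^ d * ∏ j ∈ J, e j (k j)) := by
            rw [Finset.sum_const, nsmul_eq_mul]
        _ ≤ (2 : ℝ) ^ d * (R ^ d * ∏ j ∈ J, e j (k j)) := by
            have h6 : (0 : ℝ) ≤ R ^ d * ∏ j ∈ J, e j (k j) := by
              have := Finset.prod_nonneg (s := J) fun j (_ : j ∈ J) => (hepos j (k j)).le
              positivity
            refine mul_le_mul_of_nonneg_right ?_ h6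
            rw [Finset.card_powerset]
            calc ((2 ^ T.card : ℕ) : ℝ) = (2 : ℝ) ^ T.card := by push_cast; ring
              _ ≤ (2 : ℝ) ^ d := by
                refine pow_le_pow_right₀ one_le_two
                  (le_trans (Finset.card_le_univ T) (by simp))
        _ = C J * Pk := by
            rw [hC, hPJ]
            have h7 : (∏ j ∈ Jᶜ, e j 0) ≠ 0 :=
              ne_of_gt (Finset.prod_pos fun j _ => hepos j 0)
            field_simp
    · -- the sum vanishes
      obtain ⟨i, hiT, hiJ⟩ := Finset.not_subset.mp hTJ
      have hzero : ∑ S ∈ T.powerset, (-1 : ℤ) ^ S.card • MJ J (decS k S) = 0 := by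
        refine Finset.sum_involution
          (fun S _ => if i ∈ S then S.erase i else insert i S) ?_ ?_ ?_ ?_
        · intro S hS
          by_cases hiS : i ∈ S
          · rw [if_pos hiS]
            have hMeq : MJ J (decS k S) = MJ J (decS k (S.erase i)) := by
              refine hMJdep J _ _ fun j hj => ?_
              have hij : j ≠ i := fun h => hiJ (h ▸ hj)
              simp [decS, Finset.mem_erase, hij]
            have hcard : S.card = (S.erase i).card + 1 := by
              have h1 : 1 ≤ S.card := Finset.card_pos.mpr ⟨i, hiS⟩
              rw [Finset.card_erase_of_mem hiS]
              omega
            rw [hMeq, hcard, pow_succ, mul_comm, neg_one_mul, neg_smul, neg_add_cancel]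
          · rw [if_neg hiS]
            have hMeq : MJ J (decS k S) = MJ J (decS k (insert i S)) := by
              refine hMJdep J _ _ fun j hj => ?_
              have hij : j ≠ i := fun h => hiJ (h ▸ hj)
              simp [decS, Finset.mem_insert, hij]
            have hcard : (insert i S).card = S.card + 1 :=
              Finset.card_insert_of_notMem hiS
            rw [hMeq, hcard, pow_succ, mul_comm, neg_one_mul, neg_smul, add_neg_cancel]
        · intro S hS _
          by_cases hiS : i ∈ S
          · rw [if_pos hiS]
            exact fun h => (Finset.erase_eq_self.mp h) hiS
          · rw [if_neg hiS]
            exact fun h => hiS (Finset.insert_eq_self.mp h)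
        · intro S hS
          rw [Finset.mem_powerset] at hS ⊢
          by_cases hiS : i ∈ S
          · rw [if_pos hiS]
            exact (Finset.erase_subset i S).trans hS
          · rw [if_neg hiS]
            exact Finset.insert_subset hiT hS
        · intro S hS
          by_cases hiS : i ∈ S
          · simp only [if_pos hiS, Finset.notMem_erase, if_neg]
            exact Finset.insert_erase hiS
          · simp only [if_neg hiS, Finset.mem_insert_self, if_pos]
            exact Finset.erase_insert hiS
      rw [hzero, norm_zero]
      exact mul_nonneg (hCnonneg J) hPkpos.le
  calc ‖(∑ S ∈ T.powerset, (-1 : ℤ) ^ S.card) • Minf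
        + ∑ J ∈ 𝒥, ∑ S ∈ T.powerset, (-1 : ℤ) ^ S.card • MJ J (decS k S)‖
      ≤ ‖(∑ S ∈ T.powerset, (-1 : ℤ) ^ S.card) • Minf‖
        + ‖∑ J ∈ 𝒥, ∑ S ∈ T.powerset, (-1 : ℤ) ^ S.card • MJ J (decS k S)‖ :=
        norm_add_le _ _
    _ ≤ ‖Minf‖ / P0 * Pk + ∑ J ∈ 𝒥, C J * Pk :=
        add_le_add hterm0 (le_trans (norm_sum_le _ _) (Finset.sum_le_sum hAJ))
    _ = (‖Minf‖ / P0 + ∑ J ∈ 𝒥, C J) * Pk := by rw [← Finset.sum_mul, add_mul]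
    _ ≤ K₁ * Pk := by
        refine mul_le_mul_of_nonneg_right ?_ hPkpos.le
        rw [hK]; linarith
end

section
/- (Multilinearity) Let Y₁,…,Y_m and Y be Banach spaces, let A : Y₁ × ⋯ × Y_m → Y be a continuous multilinear map, let d = d₁ + ⋯ + d_m, and let e_1,…,e_d : ℕ → (0,∞) be strictly decreasing. If for each i ∈ {1,…,m} the function M_i : ℕ^{d_i} → Y_i belongs to E_{(e_j)_{j=d₁+⋯+d_{i−1}+1}^{d₁+⋯+d_i}}(Y_i), then the function M : ℕ^d → Y defined by M(k) := A(M₁(k^{(1)}),…,M_m(k^{(m)})), where k = (k^{(1)},…,k^{(m)}) with k^{(i)} ∈ ℕ^{d_i}, belongs to E_{(e_j)_{j=1}^{d}}(Y). -/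
/-- The `j`-th unidirectional difference operator on methods indexed by a finite
index set `ι`: `(Δ_j M)(k) = M(k) - M(k - e_j)` if `k j > 0`, else `M(k)`. -/
def diffOpG {ι : Type*} [DecidableEq ι] {Y : Type*} [AddCommGroup Y] (j : ι)
    (M : (ι → ℕ) → Y) : (ι → ℕ) → Y :=
  fun k => if k j = 0 then M k else M k - M (Function.update k j (k j - 1))

/-- The mixed difference operator `Δ_mix`, the composition of all the `Δ_j`. -/
noncomputable def mixDiffG {ι : Type*} [Fintype ι] [DecidableEq ι] {Y : Type*}
    [AddCommGroup Y] (M : (ι → ℕ) → Y) : (ι → ℕ) → Y :=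
  (Finset.univ : Finset ι).toList.foldr (fun j F => diffOpG j F) M

/-- The space `E_e(Y)` of approximation methods whose mixed differences decay
like `K₁ ∏_j e_j(k_j)` for some `K₁ > 0`. -/
def EspaceG {ι : Type*} [Fintype ι] [DecidableEq ι] {Y : Type*}
    [NormedAddCommGroup Y] (e : ι → ℕ → ℝ) : Set ((ι → ℕ) → Y) :=
  {M | ∃ K₁ > (0 : ℝ), ∀ k : ι → ℕ, ‖mixDiffG M k‖ ≤ K₁ * ∏ j, e j (k j)}

section Aux

lemma diffOpG_comm {ι : Type*} [DecidableEq ι] {Y : Type*} [AddCommGroup Y]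
    (j j' : ι) (M : (ι → ℕ) → Y) :
    diffOpG j (diffOpG j' M) = diffOpG j' (diffOpG j M) := by
  rcases eq_or_ne j j' with rfl | h
  · rfl
  funext k
  simp only [diffOpG, Function.update_of_ne h, Function.update_of_ne h.symm,
    Function.update_comm h]
  split_ifs <;> abel

instance diffOpG_leftComm {ι : Type*} [DecidableEq ι] {Y : Type*} [AddCommGroup Y] :
    LeftCommutative (fun (j : ι) (F : (ι → ℕ) → Y) => diffOpG j F) :=
  ⟨fun j j' M => diffOpG_comm j j' M⟩

variable {m : ℕ} {dd : Fin m → ℕ}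

/-- extract from a list of sigma-indices the sub-list lying in block `i`. -/
def blockL (i : Fin m) (L : List ((i : Fin m) × Fin (dd i))) : List (Fin (dd i)) :=
  L.filterMap (fun j => if h : j.1 = i then some (h ▸ j.2) else none)

lemma blockL_nil (i : Fin m) : blockL i ([] : List ((i : Fin m) × Fin (dd i))) = [] := rfl

lemma blockL_cons_self (i : Fin m) (a : Fin (dd i)) (L : List ((i : Fin m) × Fin (dd i))) :
    blockL i (⟨i, a⟩ :: L) = a :: blockL i L := by
  simp [blockL]

lemma blockL_cons_ne {i i₀ : Fin m} (h : i₀ ≠ i) (a : Fin (dd i₀))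
    (L : List ((i : Fin m) × Fin (dd i))) :
    blockL i ((⟨i₀, a⟩ : (i : Fin m) × Fin (dd i)) :: L) = blockL i L := by
  simp [blockL, h]

lemma mem_blockL {i : Fin m} {b : Fin (dd i)} {L : List ((i : Fin m) × Fin (dd i))} :
    b ∈ blockL i L ↔ (⟨i, b⟩ : (i : Fin m) × Fin (dd i)) ∈ L := by
  constructor
  · intro hb
    rcases List.mem_filterMap.mp hb with ⟨⟨i', a⟩, hmem, heq⟩
    by_cases h : i' = i
    · subst h
      simp only [dif_pos rfl] at heq
      obtain rfl : a = b := by simpa using heq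
      exact hmem
    · simp [h] at heq
  · intro hmem
    exact List.mem_filterMap.mpr ⟨⟨i, b⟩, hmem, by simp⟩

lemma nodup_blockL {i : Fin m} {L : List ((i : Fin m) × Fin (dd i))} (hL : L.Nodup) :
    (blockL i L).Nodup := by
  refine List.Nodup.filterMap ?_ hL
  rintro ⟨i₁, a₁⟩ ⟨i₂, a₂⟩ b h₁ h₂
  simp only [Option.mem_def] at h₁ h₂
  by_cases h : i₁ = i
  · subst h
    rw [dif_pos rfl] at h₁
    by_cases h' : i₂ = i₁
    · subst h'
      rw [dif_pos rfl] at h₂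
      have e1 : a₁ = b := by simpa using h₁
      have e2 : a₂ = b := by simpa using h₂
      rw [show a₁ = a₂ from e1.trans e2.symm]
    · rw [dif_neg h'] at h₂; exact absurd h₂ (by simp)
  · rw [dif_neg h] at h₁; exact absurd h₁ (by simp)

variable {Yi : Fin m → Type*} [∀ i, NormedAddCommGroup (Yi i)]
    [∀ i, NormedSpace ℝ (Yi i)]
    {Y : Type*} [NormedAddCommGroup Y] [NormedSpace ℝ Y]

lemma diffOpG_step (A : ContinuousMultilinearMap ℝ Yi Y)
    (G : (i : Fin m) → (Fin (dd i) → ℕ) → Yi i) (i₀ : Fin m) (a₀ : Fin (dd i₀)) :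
    diffOpG (⟨i₀, a₀⟩ : (i : Fin m) × Fin (dd i))
        (fun k => A (fun i => G i (fun a => k ⟨i, a⟩))) =
      fun k => A (fun i => Function.update G i₀ (diffOpG a₀ (G i₀)) i (fun a => k ⟨i, a⟩)) := by
  funext k
  set v : (i : Fin m) → Yi i := fun i => G i (fun a => k ⟨i, a⟩) with hv
  by_cases h0 : k ⟨i₀, a₀⟩ = 0
  · have harg : (fun i => Function.update G i₀ (diffOpG a₀ (G i₀)) i (fun a => k ⟨i, a⟩)) = v := by
      funext i
      rcases eq_or_ne i i₀ with rfl | h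
      · simp only [Function.update_self]
        simp [diffOpG, h0, hv]
      · simp [Function.update_of_ne h, hv]
    simp [diffOpG, h0, harg, hv]
  · -- the updated index function restricted to block i₀
    have hrestr : ∀ i (x : ℕ), i ≠ i₀ → (fun a => Function.update k ⟨i₀, a₀⟩ x ⟨i, a⟩)
        = fun a => k ⟨i, a⟩ := by
      intro i x hi
      funext a
      exact Function.update_of_ne (by simp [hi]) _ _
    have hrestr₀ : ∀ x : ℕ, (fun a => Function.update k ⟨i₀, a₀⟩ x ⟨i₀, a⟩)
        = Function.update (fun a => k ⟨i₀, a⟩) a₀ x := by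
      intro x
      funext a
      rcases eq_or_ne a a₀ with rfl | ha
      · simp
      · rw [Function.update_of_ne ha, Function.update_of_ne (by simp [ha])]
    have hLHS : (fun i => G i (fun a => Function.update k ⟨i₀, a₀⟩ (k ⟨i₀, a₀⟩ - 1) ⟨i, a⟩))
        = Function.update v i₀ (G i₀ (Function.update (fun a => k ⟨i₀, a⟩) a₀ (k ⟨i₀, a₀⟩ - 1))) := by
      funext i
      rcases eq_or_ne i i₀ with rfl | h
      · rw [Function.update_self, hrestr₀]
      · rw [Function.update_of_ne h, hrestr _ _ h]
    have hRHS : (fun i => Function.update G i₀ (diffOpG a₀ (G i₀)) i (fun a => k ⟨i, a⟩))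
        = Function.update v i₀ ((diffOpG a₀ (G i₀)) (fun a => k ⟨i₀, a⟩)) := by
      funext i
      rcases eq_or_ne i i₀ with rfl | h
      · simp
      · simp [Function.update_of_ne h, hv]
    rw [hRHS]
    have hd : (diffOpG a₀ (G i₀)) (fun a => k ⟨i₀, a⟩)
        = G i₀ (fun a => k ⟨i₀, a⟩) - G i₀ (Function.update (fun a => k ⟨i₀, a⟩) a₀ (k ⟨i₀, a₀⟩ - 1)) := by
      simp [diffOpG, h0]
    rw [hd, A.map_update_sub]
    simp only [diffOpG, if_neg h0, hLHS]
    congr 1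
    rw [← hv]
    exact congrArg A (Function.update_eq_self i₀ v).symm ▸ rfl

lemma foldr_diffOpG_multilinear (A : ContinuousMultilinearMap ℝ Yi Y)
    (L : List ((i : Fin m) × Fin (dd i))) :
    ∀ G : (i : Fin m) → (Fin (dd i) → ℕ) → Yi i,
    L.foldr (fun j F => diffOpG j F) (fun k => A (fun i => G i (fun a => k ⟨i, a⟩)))
      = fun k => A (fun i => ((blockL i L).foldr (fun a F => diffOpG a F) (G i))
          (fun a => k ⟨i, a⟩)) := by
  induction L with
  | nil => intro G; simp [blockL_nil]
  | cons j L ih =>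
    intro G
    obtain ⟨i₀, a₀⟩ := j
    rw [List.foldr_cons, ih G, diffOpG_step A]
    funext k
    congr 1
    funext i
    rcases eq_or_ne i i₀ with rfl | h
    · rw [Function.update_self, blockL_cons_self, List.foldr_cons]
    · rw [Function.update_of_ne h, blockL_cons_ne (Ne.symm h)]

end Aux

/-- multilinearity: if `A : Y₁ × ⋯ × Y_m → Y` is a continuous
multilinear map between Banach spaces and `M_i ∈ E_{(e_j)_{j in block i}}(Y_i)`
for each `i`, then `k ↦ A(M₁(k^{(1)}),…,M_m(k^{(m)}))` belongs to
`E_{(e_j)_{j=1}^d}(Y)`, where `d = d₁ + ⋯ + d_m` and the coordinates of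
`k ∈ ℕ^d` are grouped into blocks `k^{(i)} ∈ ℕ^{d_i}`. -/
theorem multilinear_map_mem_Espace
    (m : ℕ) (hm : 1 ≤ m) (dd : Fin m → ℕ) (hdd : ∀ i, 1 ≤ dd i)
    (Yi : Fin m → Type*) [∀ i, NormedAddCommGroup (Yi i)]
    [∀ i, NormedSpace ℝ (Yi i)] [∀ i, CompleteSpace (Yi i)]
    {Y : Type*} [NormedAddCommGroup Y] [NormedSpace ℝ Y] [CompleteSpace Y]
    (A : ContinuousMultilinearMap ℝ Yi Y)
    (e : ((i : Fin m) × Fin (dd i)) → ℕ → ℝ)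
    (hepos : ∀ j i, 0 < e j i) (heanti : ∀ j, StrictAnti (e j))
    (Mi : (i : Fin m) → (Fin (dd i) → ℕ) → Yi i)
    (hMi : ∀ i : Fin m, Mi i ∈ EspaceG (fun (a : Fin (dd i)) => e ⟨i, a⟩)) :
    (fun k : ((i : Fin m) × Fin (dd i)) → ℕ =>
        A (fun i => Mi i (fun a => k ⟨i, a⟩))) ∈ EspaceG e := by
  choose K hKpos hKb using hMi
  -- the key structural identity
  have key : mixDiffG (fun k : ((i : Fin m) × Fin (dd i)) → ℕ =>
      A (fun i => Mi i (fun a => k ⟨i, a⟩)))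
      = fun k => A (fun i => mixDiffG (Mi i) (fun a => k ⟨i, a⟩)) := by
    unfold mixDiffG
    rw [foldr_diffOpG_multilinear A _ Mi]
    funext k
    congr 1
    funext i
    have hperm : List.Perm (blockL i (Finset.univ : Finset ((i : Fin m) × Fin (dd i))).toList)
        (Finset.univ : Finset (Fin (dd i))).toList := by
      rw [List.perm_ext_iff_of_nodup (nodup_blockL (Finset.nodup_toList _))
        (Finset.nodup_toList _)]
      intro b
      simp [mem_blockL]
    rw [hperm.foldr_eq]
  refine ⟨‖A‖ * ∏ i, K i + 1, by
    have h1 : (0:ℝ) ≤ ‖A‖ * ∏ i, K i :=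
      mul_nonneg (norm_nonneg A) (Finset.prod_pos fun i _ => hKpos i).le
    linarith, fun k => ?_⟩
  rw [key]
  have h1 : ‖A (fun i => mixDiffG (Mi i) (fun a => k ⟨i, a⟩))‖
      ≤ ‖A‖ * ∏ i, ‖mixDiffG (Mi i) (fun a => k ⟨i, a⟩)‖ := A.le_opNorm _
  have h2 : ∏ i, ‖mixDiffG (Mi i) (fun a => k ⟨i, a⟩)‖
      ≤ ∏ i, (K i * ∏ a, e ⟨i, a⟩ (k ⟨i, a⟩)) := by
    refine Finset.prod_le_prod (fun i _ => norm_nonneg _) (fun i _ => hKb i _)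
  have h3 : ∏ j, e j (k j) = ∏ i, ∏ a, e ⟨i, a⟩ (k ⟨i, a⟩) := by
    rw [← Finset.univ_sigma_univ, Finset.prod_sigma]
  have hprodpos : (0:ℝ) ≤ ∏ j, e j (k j) :=
    Finset.prod_nonneg fun j _ => (hepos j _).le
  calc ‖A (fun i => mixDiffG (Mi i) (fun a => k ⟨i, a⟩))‖
      ≤ ‖A‖ * ∏ i, (K i * ∏ a, e ⟨i, a⟩ (k ⟨i, a⟩)) :=
        h1.trans (mul_le_mul_of_nonneg_left h2 (norm_nonneg A))
    _ = (‖A‖ * ∏ i, K i) * ∏ j, e j (k j) := by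
        rw [Finset.prod_mul_distrib, h3]; ring
    _ ≤ (‖A‖ * ∏ i, K i + 1) * ∏ j, e j (k j) := by
        apply mul_le_mul_of_nonneg_right _ hprodpos
        linarith
end

section
/- (Tensor product algorithms) Let Y₁,…,Y_d be Banach spaces and let M_j : ℕ → Y_j converge at the rates ‖M_j(i) − M_{∞,j}‖_{Y_j} ≤ e_j(i) to limits M_{∞,j} ∈ Y_j, where the e_j : ℕ → (0,∞) are strictly decreasing with uniformly bounded ratios e_j(i)/e_j(i+1). Let Y be a normed space and τ : Y₁ × ⋯ × Y_d → Y a multilinear map satisfying ‖τ(y₁,…,y_d)‖_Y ≤ ‖y₁‖_{Y₁} ⋯ ‖y_d‖_{Y_d} (for instance, the canonical map into the algebraic tensor product Y₁ ⊗ ⋯ ⊗ Y_d equipped with a cross norm). Then the function M : ℕ^d → Y defined by M(k) := τ(M₁(k₁),…,M_d(k_d)) belongs to E_e(Y); that is, there exists K₁ > 0 with ‖(Δ_mix M)(k)‖_Y ≤ K₁ ∏_{j=1}^d e_j(k_j) for all k ∈ ℕ^d. -/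
/-- Auxiliary one-dimensional difference operator. -/
def Dnat {Y : Type*} [AddCommGroup Y] (N : ℕ → Y) (i : ℕ) : Y :=
  if i = 0 then N i else N i - N (i - 1)

theorem foldr_diffOp_tensor
    {d : ℕ} {Yi : Fin d → Type*} [∀ j, NormedAddCommGroup (Yi j)]
    [∀ j, NormedSpace ℝ (Yi j)]
    {Y : Type*} [NormedAddCommGroup Y] [NormedSpace ℝ Y]
    (τ : MultilinearMap ℝ Yi Y)
    (f : (j : Fin d) → ℕ → Yi j) :
    ∀ (l : List (Fin d)), l.Nodup → ∀ k : Fin d → ℕ,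
      (l.foldr (fun j F => diffOp j F) (fun k' => τ (fun j => f j (k' j)))) k
        = τ (fun j => if j ∈ l then Dnat (f j) (k j) else f j (k j)) := by
  intro l
  induction l with
  | nil => intro _ k; simp
  | cons a t ih =>
    intro hnd k
    have hat : a ∉ t := (List.nodup_cons.mp hnd).1
    have hnt : t.Nodup := (List.nodup_cons.mp hnd).2
    show diffOp a (t.foldr (fun j F => diffOp j F) _) k = _
    rw [diffOp]
    by_cases h0 : k a = 0
    · rw [if_pos h0, ih hnt k]
      congr 1
      funext j
      rcases eq_or_ne j a with rfl | hja
      · simp [hat, Dnat, h0]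
      · simp [hja, List.mem_cons]
    · rw [if_neg h0, ih hnt k, ih hnt (Function.update k a (k a - 1))]
      have h1 : (fun j => if j ∈ t then Dnat (f j) (k j) else f j (k j))
          = Function.update (fun j => if j ∈ t then Dnat (f j) (k j) else f j (k j))
              a (f a (k a)) := by
        funext j
        rcases eq_or_ne j a with rfl | hja
        · simp [hat]
        · simp [Function.update_of_ne hja]
      have h2 : (fun j => if j ∈ t then Dnat (f j) ((Function.update k a (k a - 1)) j)
              else f j ((Function.update k a (k a - 1)) j))
          = Function.update (fun j => if j ∈ t then Dnat (f j) (k j) else f j (k j))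
              a (f a (k a - 1)) := by
        funext j
        rcases eq_or_ne j a with rfl | hja
        · simp [hat]
        · simp [Function.update_of_ne hja]
      rw [h1, h2, ← MultilinearMap.map_update_sub]
      congr 1
      funext j
      rcases eq_or_ne j a with rfl | hja
      · simp [Dnat, h0]
      · simp [Function.update_of_ne hja, hja, List.mem_cons]

/-- tensor product algorithms: let `M_j : ℕ → Y_j` converge to
limits `M_{∞,j}` at rates `‖M_j(i) - M_{∞,j}‖ ≤ e_j(i)`, with the `e_j` strictly
decreasing, positive, and with uniformly bounded ratios `e_j(i)/e_j(i+1)`; let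
`τ : Y₁ × ⋯ × Y_d → Y` be a multilinear map with `‖τ(y)‖ ≤ ∏_j ‖y_j‖` (e.g. the
canonical map into a tensor product with a cross norm). Then
`M(k) := τ(M₁(k₁),…,M_d(k_d))` belongs to `E_e(Y)`. -/
theorem tensor_product_mem_Espace
    {d : ℕ} (hd : 1 ≤ d)
    (Yi : Fin d → Type*) [∀ j, NormedAddCommGroup (Yi j)]
    [∀ j, NormedSpace ℝ (Yi j)] [∀ j, CompleteSpace (Yi j)]
    {Y : Type*} [NormedAddCommGroup Y] [NormedSpace ℝ Y]
    (e : Fin d → ℕ → ℝ) (hepos : ∀ j i, 0 < e j i) (heanti : ∀ j, StrictAnti (e j))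
    (R : ℝ) (hR : ∀ (j : Fin d) (i : ℕ), e j i / e j (i + 1) ≤ R)
    (M : (j : Fin d) → ℕ → Yi j) (Minf : (j : Fin d) → Yi j)
    (hrate : ∀ (j : Fin d) (i : ℕ), ‖M j i - Minf j‖ ≤ e j i)
    (τ : MultilinearMap ℝ Yi Y)
    (hτ : ∀ y : (j : Fin d) → Yi j, ‖τ y‖ ≤ ∏ j, ‖y j‖) :
    ∃ K₁ > (0 : ℝ), ∀ k : Fin d → ℕ,
      ‖mixDiff (fun k' : Fin d → ℕ => τ (fun j => M j (k' j))) k‖ ≤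
        K₁ * ∏ j, e j (k j) := by
  classical
  have j0 : Fin d := ⟨0, hd⟩
  have hRpos : 0 < R :=
    lt_of_lt_of_le (div_pos (hepos j0 0) (hepos j0 1)) (hR j0 0)
  set K : Fin d → ℝ := fun j => max (1 + R) ((‖M j 0‖ + 1) / e j 0) with hK
  have hKpos : ∀ j, 0 < K j := fun j =>
    lt_of_lt_of_le (by linarith) (le_max_left _ _)
  have hbound : ∀ (j : Fin d) (i : ℕ), ‖Dnat (M j) i‖ ≤ K j * e j i := by
    intro j i
    rcases Nat.eq_zero_or_pos i with rfl | hi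
    · have h1 : ‖Dnat (M j) 0‖ = ‖M j 0‖ := by simp [Dnat]
      rw [h1]
      have : ‖M j 0‖ ≤ ((‖M j 0‖ + 1) / e j 0) * e j 0 := by
        rw [div_mul_cancel₀ _ (ne_of_gt (hepos j 0))]; linarith
      exact this.trans (mul_le_mul_of_nonneg_right (le_max_right _ _)
        (le_of_lt (hepos j 0)))
    · have hne : i ≠ 0 := Nat.pos_iff_ne_zero.mp hi
      have h1 : Dnat (M j) i = M j i - M j (i - 1) := by simp [Dnat, hne]
      have h2 : ‖M j i - M j (i - 1)‖ ≤ e j i + e j (i - 1) := by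
        calc ‖M j i - M j (i - 1)‖
            = ‖(M j i - Minf j) - (M j (i - 1) - Minf j)‖ := by abel_nf
          _ ≤ ‖M j i - Minf j‖ + ‖M j (i - 1) - Minf j‖ := norm_sub_le _ _
          _ ≤ e j i + e j (i - 1) := add_le_add (hrate j i) (hrate j (i - 1))
      have h3 : e j (i - 1) ≤ R * e j i := by
        have := hR j (i - 1)
        rw [Nat.sub_add_cancel hi] at this
        calc e j (i - 1) = (e j (i - 1) / e j i) * e j i := by
              rw [div_mul_cancel₀ _ (ne_of_gt (hepos j i))]
          _ ≤ R * e j i := mul_le_mul_of_nonneg_right this (le_of_lt (hepos j i))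
      have h4 : (1 + R) * e j i ≤ K j * e j i :=
        mul_le_mul_of_nonneg_right (le_max_left _ _) (le_of_lt (hepos j i))
      rw [h1]
      calc ‖M j i - M j (i - 1)‖ ≤ e j i + e j (i - 1) := h2
        _ ≤ (1 + R) * e j i := by linarith
        _ ≤ K j * e j i := h4
  refine ⟨∏ j, K j, Finset.prod_pos fun j _ => hKpos j, fun k => ?_⟩
  have key : mixDiff (fun k' : Fin d → ℕ => τ (fun j => M j (k' j))) k
      = τ (fun j => Dnat (M j) (k j)) := by
    rw [mixDiff, foldr_diffOp_tensor τ M (List.finRange d) (List.nodup_finRange d) k]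
    simp [List.mem_finRange]
  rw [key]
  calc ‖τ (fun j => Dnat (M j) (k j))‖ ≤ ∏ j, ‖Dnat (M j) (k j)‖ := hτ _
    _ ≤ ∏ j, K j * e j (k j) :=
        Finset.prod_le_prod (fun j _ => norm_nonneg _) (fun j _ => hbound j (k j))
    _ = (∏ j, K j) * ∏ j, e j (k j) := Finset.prod_mul_distrib
end

section
/- The knapsack problem has a (not necessarily unique) solution: the supremum of |I|_e over all subsets I ⊆ ℕ^d with |I|_w ≤ W is finite and is attained by some subset I* ⊆ ℕ^d with |I*|_w ≤ W. -/
open scoped ENNReal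

/-- `|I|_e := K₁ ∑_{k ∈ I} ∏_j e_j(k_j)`, with values in `[0,∞]`. -/
noncomputable def knapsackValue {d : ℕ} (K₁ : ℝ) (e : Fin d → ℕ → ℝ)
    (I : Set (Fin d → ℕ)) : ℝ≥0∞ :=
  ENNReal.ofReal K₁ * ∑' k : I, ∏ j, ENNReal.ofReal (e j ((k : Fin d → ℕ) j))

/-- `|I|_w := K₂ ∑_{k ∈ I} ∏_j w_j(k_j)`, with values in `[0,∞]`. -/
noncomputable def knapsackWork {d : ℕ} (K₂ : ℝ) (w : Fin d → ℕ → ℝ)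
    (I : Set (Fin d → ℕ)) : ℝ≥0∞ :=
  ENNReal.ofReal K₂ * ∑' k : I, ∏ j, ENNReal.ofReal (w j ((k : Fin d → ℕ) j))

lemma tsum_set_eq_sum {X : Type*} (f : X → ℝ≥0∞) {s : Set X} (hs : s.Finite) :
    ∑' x : s, f x = ∑ x ∈ hs.toFinset, f x := by
  conv_lhs => rw [← hs.coe_toFinset]
  exact Finset.tsum_subtype _ f

lemma exists_compress {d : ℕ} (s : Finset (Fin d → ℕ)) :
    ∃ φ : (Fin d → ℕ) → (Fin d → ℕ),
      (∀ k ∈ s, ∀ k' ∈ s, φ k = φ k' → k = k') ∧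
      (∀ k ∈ s, ∀ j, φ k j ≤ k j ∧ φ k j < s.card) := by
  classical
  set V : Fin d → Finset ℕ := fun j => s.image (· j) with hV
  have key : ∀ j : Fin d, ∀ a ∈ V j, ∀ b : ℕ, a < b →
      ((V j).filter (· < a)).card < ((V j).filter (· < b)).card := by
    intro j a ha b hab
    apply Finset.card_lt_card
    rw [Finset.ssubset_iff_of_subset
      (Finset.monotone_filter_right _ (fun x _ hx => hx.trans hab))]
    exact ⟨a, Finset.mem_filter.mpr ⟨ha, hab⟩, fun h => lt_irrefl a (Finset.mem_filter.mp h).2⟩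
  refine ⟨fun k j => ((V j).filter (· < k j)).card, ?_, ?_⟩
  · intro k hk k' hk' h
    funext j
    have hj : ((V j).filter (· < k j)).card = ((V j).filter (· < k' j)).card :=
      congrFun h j
    have h1 : k j ∈ V j := Finset.mem_image.mpr ⟨k, hk, rfl⟩
    have h2 : k' j ∈ V j := Finset.mem_image.mpr ⟨k', hk', rfl⟩
    rcases lt_trichotomy (k j) (k' j) with hlt | heq | hgt
    · exact absurd hj (key j _ h1 _ hlt).ne
    · exact heq
    · exact absurd hj.symm (key j _ h2 _ hgt).ne
  · intro k hk j
    constructor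
    · calc ((V j).filter (· < k j)).card ≤ (Finset.range (k j)).card := by
            apply Finset.card_le_card
            intro x hx
            exact Finset.mem_range.mpr (Finset.mem_filter.mp hx).2
        _ = k j := Finset.card_range _
    · calc ((V j).filter (· < k j)).card < (V j).card := by
            apply Finset.card_lt_card
            rw [Finset.ssubset_iff_of_subset (Finset.filter_subset _ _)]
            exact ⟨k j, Finset.mem_image.mpr ⟨k, hk, rfl⟩,
              fun h => lt_irrefl _ (Finset.mem_filter.mp h).2⟩
        _ ≤ s.card := Finset.card_image_le

/-- the knapsack problem has a (not necessarily unique) solution: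
the supremum of `|I|_e` over all `I ⊆ ℕ^d` with `|I|_w ≤ W` is finite and is
attained by some subset `I*` with `|I*|_w ≤ W`. -/
theorem knapsack_has_solution
    {d : ℕ} (hd : 1 ≤ d) (e w : Fin d → ℕ → ℝ)
    (hepos : ∀ j i, 0 < e j i) (heanti : ∀ j, StrictAnti (e j))
    (hwpos : ∀ j i, 0 < w j i) (hwmono : ∀ j, Monotone (w j))
    (K₁ K₂ W : ℝ) (hK₁ : 0 < K₁) (hK₂ : 0 < K₂) (hW : 0 < W) :
    ∃ Istar : Set (Fin d → ℕ),
      knapsackWork K₂ w Istar ≤ ENNReal.ofReal W ∧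
      knapsackValue K₁ e Istar ≠ ⊤ ∧
      ∀ I : Set (Fin d → ℕ), knapsackWork K₂ w I ≤ ENNReal.ofReal W →
        knapsackValue K₁ e I ≤ knapsackValue K₁ e Istar := by
  classical
  set c : ℝ := ∏ j, w j 0 with hcdef
  have hc : 0 < c := Finset.prod_pos (fun j _ => hwpos j 0)
  set N : ℕ := ⌈W / (K₂ * c)⌉₊ with hNdef
  -- every point's work-weight is at least c
  have termw : ∀ k : Fin d → ℕ,
      ENNReal.ofReal c ≤ ∏ j, ENNReal.ofReal (w j (k j)) := by
    intro k
    rw [hcdef, ENNReal.ofReal_prod_of_nonneg (fun j _ => (hwpos j 0).le)]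
    exact Finset.prod_le_prod' fun j _ =>
      ENNReal.ofReal_le_ofReal (hwmono j (Nat.zero_le _))
  -- feasible sets are finite
  have hfin : ∀ I : Set (Fin d → ℕ),
      knapsackWork K₂ w I ≤ ENNReal.ofReal W → I.Finite := by
    intro I hI
    have hK₂0 : ENNReal.ofReal K₂ ≠ 0 := by
      simp [ENNReal.ofReal_eq_zero, not_le, hK₂]
    have hsum : ∑' k : I, ∏ j, ENNReal.ofReal (w j ((k : Fin d → ℕ) j)) ≠ ⊤ := by
      intro h
      rw [knapsackWork, h, ENNReal.mul_top hK₂0] at hI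
      exact ENNReal.ofReal_ne_top (top_le_iff.mp hI)
    have hc0 : (ENNReal.ofReal c) ≠ 0 := by
      simp [ENNReal.ofReal_eq_zero, not_le, hc]
    have hfin' := ENNReal.finite_const_le_of_tsum_ne_top hsum hc0
    have huniv : {i : I | ENNReal.ofReal c ≤
        ∏ j, ENNReal.ofReal (w j ((i : Fin d → ℕ) j))} = Set.univ :=
      Set.eq_univ_of_forall fun i => termw i
    rw [huniv, Set.finite_univ_iff] at hfin'
    exact I.toFinite
  -- feasible sets have at most N elements
  have hcard : ∀ (I : Set (Fin d → ℕ)) (hIf : I.Finite),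
      knapsackWork K₂ w I ≤ ENNReal.ofReal W → hIf.toFinset.card ≤ N := by
    intro I hIf hle
    rw [knapsackWork, tsum_set_eq_sum (fun k => ∏ j, ENNReal.ofReal (w j (k j))) hIf] at hle
    have h1 : (hIf.toFinset.card : ℝ≥0∞) * ENNReal.ofReal c ≤
        ∑ k ∈ hIf.toFinset, ∏ j, ENNReal.ofReal (w j (k j)) := by
      simpa [nsmul_eq_mul] using
        Finset.card_nsmul_le_sum hIf.toFinset _ _ (fun k _ => termw k)
    have h2 : (hIf.toFinset.card : ℝ≥0∞) * ENNReal.ofReal (K₂ * c) ≤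
        ENNReal.ofReal W := by
      calc (hIf.toFinset.card : ℝ≥0∞) * ENNReal.ofReal (K₂ * c)
          = ENNReal.ofReal K₂ * ((hIf.toFinset.card : ℝ≥0∞) * ENNReal.ofReal c) := by
            rw [ENNReal.ofReal_mul hK₂.le]; ring
        _ ≤ ENNReal.ofReal K₂ * ∑ k ∈ hIf.toFinset, ∏ j, ENNReal.ofReal (w j (k j)) :=
            mul_le_mul_right h1 _
        _ ≤ ENNReal.ofReal W := hle
    have h3 : (hIf.toFinset.card : ℝ≥0∞) ≤ ENNReal.ofReal (W / (K₂ * c)) := by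
      rw [ENNReal.ofReal_div_of_pos (mul_pos hK₂ hc),
        ENNReal.le_div_iff_mul_le
          (Or.inl (by simp [ENNReal.ofReal_eq_zero, not_le, mul_pos hK₂ hc]))
          (Or.inl ENNReal.ofReal_ne_top)]
      exact h2
    have h4 : (hIf.toFinset.card : ℝ) ≤ W / (K₂ * c) := by
      rw [← ENNReal.ofReal_natCast] at h3
      exact (ENNReal.ofReal_le_ofReal_iff (by positivity)).mp h3
    exact_mod_cast h4.trans (Nat.le_ceil _)
  -- finset versions of value and work
  have hvalF : ∀ F : Finset (Fin d → ℕ), knapsackValue K₁ e ↑F =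
      ENNReal.ofReal K₁ * ∑ k ∈ F, ∏ j, ENNReal.ofReal (e j (k j)) := by
    intro F; rw [knapsackValue]; congr 1
    exact Finset.tsum_subtype F (fun k => ∏ j, ENNReal.ofReal (e j (k j)))
  have hworkF : ∀ F : Finset (Fin d → ℕ), knapsackWork K₂ w ↑F =
      ENNReal.ofReal K₂ * ∑ k ∈ F, ∏ j, ENNReal.ofReal (w j (k j)) := by
    intro F; rw [knapsackWork]; congr 1
    exact Finset.tsum_subtype F (fun k => ∏ j, ENNReal.ofReal (w j (k j)))
  -- candidates: feasible subsets of the finite box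
  set Box : Finset (Fin d → ℕ) := Fintype.piFinset fun _ => Finset.range N with hBox
  set cand : Finset (Finset (Fin d → ℕ)) :=
    Box.powerset.filter (fun F => knapsackWork K₂ w ↑F ≤ ENNReal.ofReal W) with hcand
  have hne : cand.Nonempty := by
    refine ⟨∅, Finset.mem_filter.mpr ⟨Finset.mem_powerset.mpr (Finset.empty_subset _), ?_⟩⟩
    rw [hworkF]; simp
  obtain ⟨Fs, hFs, hmax⟩ :=
    Finset.exists_max_image cand (fun F => knapsackValue K₁ e ↑F) hne
  refine ⟨↑Fs, (Finset.mem_filter.mp hFs).2, ?_, ?_⟩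
  · rw [hvalF]
    refine ENNReal.mul_ne_top ENNReal.ofReal_ne_top ?_
    exact (ENNReal.sum_lt_top.mpr fun k _ => ENNReal.prod_lt_top fun j _ => ENNReal.ofReal_lt_top).ne
  · intro I hIfeas
    have hIf := hfin I hIfeas
    obtain ⟨φ, hinj, hbd⟩ := exists_compress hIf.toFinset
    set t : Finset (Fin d → ℕ) := hIf.toFinset.image φ with ht
    have hcardI := hcard I hIf hIfeas
    have htmem : t ∈ cand := by
      rw [hcand, Finset.mem_filter]
      constructor
      · rw [Finset.mem_powerset]
        intro x hx
        obtain ⟨k, hk, rfl⟩ := Finset.mem_image.mp hx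
        rw [hBox, Fintype.mem_piFinset]
        intro j
        exact Finset.mem_range.mpr (lt_of_lt_of_le (hbd k hk j).2 hcardI)
      · rw [hworkF, Finset.sum_image hinj]
        calc ENNReal.ofReal K₂ * ∑ k ∈ hIf.toFinset, ∏ j, ENNReal.ofReal (w j (φ k j))
            ≤ ENNReal.ofReal K₂ * ∑ k ∈ hIf.toFinset, ∏ j, ENNReal.ofReal (w j (k j)) := by
              refine mul_le_mul_right (Finset.sum_le_sum fun k hk => ?_) _
              exact Finset.prod_le_prod' fun j _ =>
                ENNReal.ofReal_le_ofReal (hwmono j (hbd k hk j).1)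
          _ = knapsackWork K₂ w I := by rw [knapsackWork, tsum_set_eq_sum (fun k => ∏ j, ENNReal.ofReal (w j (k j))) hIf]
          _ ≤ ENNReal.ofReal W := hIfeas
    have hvle : knapsackValue K₁ e I ≤ knapsackValue K₁ e ↑t := by
      rw [knapsackValue, tsum_set_eq_sum (fun k => ∏ j, ENNReal.ofReal (e j (k j))) hIf, hvalF, Finset.sum_image hinj]
      refine mul_le_mul_right (Finset.sum_le_sum fun k hk => ?_) _
      exact Finset.prod_le_prod' fun j _ =>
        ENNReal.ofReal_le_ofReal ((heanti j).antitone (hbd k hk j).1)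
    exact hvle.trans (hmax t htmem)
end

section
/- (Quasi-optimality of Dantzig's threshold sets) For δ > 0 let I_δ := {k ∈ ℕ^d : ∏_{j=1}^d e_j(k_j)/w_j(k_j) > δ}. If δ(W) > 0 is minimal with the property |I_{δ(W)}|_w ≤ W (i.e., |I_{δ(W)}|_w ≤ W and |I_{δ'}|_w > W for every 0 < δ' < δ(W)), then |I_{δ(W)}|_e ≥ (|I_{δ(W)}|_w / W) · E*(W). In particular, if |I_{δ(W)}|_w = W then I_{δ(W)} is a solution of the knapsack problem. -/
open scoped ENNReal

/-- Dantzig's threshold set `I_δ := {k : ∏_j e_j(k_j)/w_j(k_j) > δ}`. -/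
def dantzigSet {d : ℕ} (e w : Fin d → ℕ → ℝ) (δ : ℝ) : Set (Fin d → ℕ) :=
  {k | δ < ∏ j, e j (k j) / w j (k j)}

open scoped NNReal

/-- The abstract arithmetic inequality behind quasi-optimality. -/
private lemma dantzig_core {W₂ δ x a b V p q : ℝ≥0∞} (hW₂ : W₂ ≠ ∞) (hδ : δ ≠ ∞)
    (hxa : x + a ≤ W₂) (hxb : x + b ≤ W₂)
    (hV : δ * x ≤ V) (hq : δ * a ≤ q) (hp : p ≤ δ * b) :
    (x + a) * (V + p) ≤ W₂ * (V + q) := by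
  have hx : x ≠ ∞ := ne_top_of_le_ne_top hW₂ (le_trans (le_add_right le_rfl) hxa)
  have ha : a ≠ ∞ := ne_top_of_le_ne_top hW₂ (le_trans (le_add_left le_rfl) hxa)
  have hb : b ≠ ∞ := ne_top_of_le_ne_top hW₂ (le_trans (le_add_left le_rfl) hxb)
  have hpne : p ≠ ∞ := ne_top_of_le_ne_top (ENNReal.mul_ne_top hδ hb) hp
  by_cases hVq : V + q = ∞
  · rcases eq_or_ne (x + a) 0 with h0 | h0
    · simp [h0]
    · have : W₂ * (V + q) = ∞ := by
        rw [hVq, ENNReal.mul_top]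
        exact fun h => h0 (le_antisymm (h ▸ hxa) (zero_le))
      simp [this]
  · have hVne : V ≠ ∞ := fun h => hVq (by simp [h])
    have hqne : q ≠ ∞ := fun h => hVq (by simp [h])
    lift W₂ to ℝ≥0 using hW₂
    lift δ to ℝ≥0 using hδ
    lift x to ℝ≥0 using hx
    lift a to ℝ≥0 using ha
    lift b to ℝ≥0 using hb
    lift V to ℝ≥0 using hVne
    lift q to ℝ≥0 using hqne
    lift p to ℝ≥0 using hpne
    simp only [← ENNReal.coe_mul, ← ENNReal.coe_add, ENNReal.coe_le_coe,
      ← NNReal.coe_le_coe] at hxa hxb hV hq hp ⊢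
    push_cast at *
    nlinarith [mul_nonneg (sub_nonneg.2 hp) (add_nonneg x.coe_nonneg a.coe_nonneg),
      mul_nonneg (sub_nonneg.2 hq) W₂.coe_nonneg,
      mul_nonneg (sub_nonneg.2 hV) (sub_nonneg.2 hxa),
      mul_nonneg (mul_nonneg δ.coe_nonneg (add_nonneg a.coe_nonneg x.coe_nonneg))
        (sub_nonneg.2 hxb)]

private lemma dantzig_tsum_split {α : Type*} (f : α → ℝ≥0∞) (S A : Set α) :
    ∑' k : S, f k = (∑' k : ↥(S ∩ A), f k) + ∑' k : ↥(S \ A), f k := by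
  rw [tsum_subtype, tsum_subtype, tsum_subtype, ← ENNReal.tsum_add]
  congr 1
  funext x
  by_cases hS : x ∈ S <;> by_cases hA : x ∈ A <;>
    simp [Set.indicator, hS, hA, Set.mem_diff]

private lemma dantzig_prod_compare {d : ℕ} (e w : Fin d → ℕ → ℝ)
    (hepos : ∀ j i, 0 < e j i) (hwpos : ∀ j i, 0 < w j i)
    (δ : ℝ) (hδ : 0 ≤ δ) (k : Fin d → ℕ) :
    (δ < ∏ j, e j (k j) / w j (k j) →
      ENNReal.ofReal δ * ∏ j, ENNReal.ofReal (w j (k j)) ≤ ∏ j, ENNReal.ofReal (e j (k j))) ∧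
    (∏ j, e j (k j) / w j (k j) ≤ δ →
      ∏ j, ENNReal.ofReal (e j (k j)) ≤ ENNReal.ofReal δ * ∏ j, ENNReal.ofReal (w j (k j))) := by
  have hwprod : 0 < ∏ j, w j (k j) := Finset.prod_pos (fun j _ => hwpos j (k j))
  have hdiv : ∏ j, e j (k j) / w j (k j) = (∏ j, e j (k j)) / ∏ j, w j (k j) :=
    Finset.prod_div_distrib _ _
  have hwcast : ∏ j, ENNReal.ofReal (w j (k j)) = ENNReal.ofReal (∏ j, w j (k j)) := by
    rw [ENNReal.ofReal_prod_of_nonneg (fun j _ => (hwpos j (k j)).le)]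
  have hecast : ∏ j, ENNReal.ofReal (e j (k j)) = ENNReal.ofReal (∏ j, e j (k j)) := by
    rw [ENNReal.ofReal_prod_of_nonneg (fun j _ => (hepos j (k j)).le)]
  constructor
  · intro h
    rw [hwcast, hecast, ← ENNReal.ofReal_mul hδ]
    apply ENNReal.ofReal_le_ofReal
    rw [hdiv, lt_div_iff₀ hwprod] at h
    linarith
  · intro h
    rw [hwcast, hecast, ← ENNReal.ofReal_mul hδ]
    apply ENNReal.ofReal_le_ofReal
    rw [hdiv, div_le_iff₀ hwprod] at h
    linarith

/-- quasi-optimality of Dantzig's threshold sets: if `δ(W) > 0` is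
minimal with `|I_{δ(W)}|_w ≤ W`, then `|I_{δ(W)}|_e ≥ (|I_{δ(W)}|_w / W) ⬝ E*(W)`,
stated multiplicatively as `|I_{δ(W)}|_w ⬝ |I|_e ≤ W ⬝ |I_{δ(W)}|_e` for every
feasible `I`; in particular, if `|I_{δ(W)}|_w = W` then `I_{δ(W)}` solves the
knapsack problem. -/
theorem dantzig_set_quasi_optimal
    {d : ℕ} (hd : 1 ≤ d) (e w : Fin d → ℕ → ℝ)
    (hepos : ∀ j i, 0 < e j i) (heanti : ∀ j, StrictAnti (e j))
    (hwpos : ∀ j i, 0 < w j i) (hwmono : ∀ j, Monotone (w j))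
    (K₁ K₂ W : ℝ) (hK₁ : 0 < K₁) (hK₂ : 0 < K₂) (hW : 0 < W)
    (δW : ℝ) (hδW : 0 < δW)
    (hfeas : knapsackWork K₂ w (dantzigSet e w δW) ≤ ENNReal.ofReal W)
    (hmin : ∀ δ' : ℝ, 0 < δ' → δ' < δW →
      ¬ knapsackWork K₂ w (dantzigSet e w δ') ≤ ENNReal.ofReal W) :
    (∀ I : Set (Fin d → ℕ), knapsackWork K₂ w I ≤ ENNReal.ofReal W →
      knapsackWork K₂ w (dantzigSet e w δW) * knapsackValue K₁ e I ≤
        ENNReal.ofReal W * knapsackValue K₁ e (dantzigSet e w δW)) ∧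
    (knapsackWork K₂ w (dantzigSet e w δW) = ENNReal.ofReal W →
      ∀ I : Set (Fin d → ℕ), knapsackWork K₂ w I ≤ ENNReal.ofReal W →
        knapsackValue K₁ e I ≤ knapsackValue K₁ e (dantzigSet e w δW)) := by
  have main : ∀ I : Set (Fin d → ℕ), knapsackWork K₂ w I ≤ ENNReal.ofReal W →
      knapsackWork K₂ w (dantzigSet e w δW) * knapsackValue K₁ e I ≤
        ENNReal.ofReal W * knapsackValue K₁ e (dantzigSet e w δW) := by
    intro I hI
    simp only [knapsackWork, knapsackValue] at hI hfeas ⊢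
    set A : Set (Fin d → ℕ) := dantzigSet e w δW with hAdef
    set F : (Fin d → ℕ) → ℝ≥0∞ := fun k => ∏ j, ENNReal.ofReal (e j (k j)) with hF
    set G : (Fin d → ℕ) → ℝ≥0∞ := fun k => ∏ j, ENNReal.ofReal (w j (k j)) with hG
    set W₂ : ℝ≥0∞ := ENNReal.ofReal (W / K₂) with hW₂def
    have hK₂0 : ENNReal.ofReal K₂ ≠ 0 := (ENNReal.ofReal_pos.2 hK₂).ne'
    have hWeq : ENNReal.ofReal W = ENNReal.ofReal K₂ * W₂ := by
      rw [hW₂def, ← ENNReal.ofReal_mul hK₂.le, mul_div_cancel₀ _ hK₂.ne']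
    have hub : ∀ S : Set (Fin d → ℕ), S ⊆ A →
        ENNReal.ofReal δW * ∑' k : S, G k ≤ ∑' k : S, F k := by
      intro S hS
      rw [← ENNReal.tsum_mul_left]
      exact ENNReal.tsum_le_tsum fun k =>
        (dantzig_prod_compare e w hepos hwpos δW hδW.le k).1 (hS k.2)
    have hlb : ∀ S : Set (Fin d → ℕ), (∀ k ∈ S, k ∉ A) →
        ∑' k : S, F k ≤ ENNReal.ofReal δW * ∑' k : S, G k := by
      intro S hS
      rw [← ENNReal.tsum_mul_left]
      exact ENNReal.tsum_le_tsum fun k =>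
        (dantzig_prod_compare e w hepos hwpos δW hδW.le k).2 (not_lt.1 (hS k k.2))
    have hGA : (∑' k : A, G k) = (∑' k : ↥(I ∩ A), G k) + ∑' k : ↥(A \ I), G k := by
      rw [dantzig_tsum_split G A I, Set.inter_comm]
    have hGI : (∑' k : I, G k) = (∑' k : ↥(I ∩ A), G k) + ∑' k : ↥(I \ A), G k :=
      dantzig_tsum_split G I A
    have hFA : (∑' k : A, F k) = (∑' k : ↥(I ∩ A), F k) + ∑' k : ↥(A \ I), F k := by
      rw [dantzig_tsum_split F A I, Set.inter_comm]
    have hFI : (∑' k : I, F k) = (∑' k : ↥(I ∩ A), F k) + ∑' k : ↥(I \ A), F k :=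
      dantzig_tsum_split F I A
    have hcancel : ∀ u v : ℝ≥0∞, ENNReal.ofReal K₂ * u ≤ ENNReal.ofReal K₂ * v → u ≤ v :=
      fun u v h => (ENNReal.mul_le_mul_iff_right hK₂0 ENNReal.ofReal_ne_top).1 h
    have hA2 : (∑' k : A, G k) ≤ W₂ := hcancel _ _ (hWeq ▸ hfeas)
    have hI2 : (∑' k : I, G k) ≤ W₂ := hcancel _ _ (hWeq ▸ hI)
    have key : (∑' k : A, G k) * (∑' k : I, F k) ≤ W₂ * ∑' k : A, F k := by
      rw [hGA, hFI, hFA]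
      exact dantzig_core ENNReal.ofReal_ne_top ENNReal.ofReal_ne_top
        (hGA ▸ hA2) (hGI ▸ hI2)
        (hub _ (Set.inter_subset_right))
        (hub _ (Set.diff_subset))
        (hlb _ (fun k hk => hk.2))
    calc (ENNReal.ofReal K₂ * ∑' k : A, G k) * (ENNReal.ofReal K₁ * ∑' k : I, F k)
        = ENNReal.ofReal K₁ * (ENNReal.ofReal K₂ * ((∑' k : A, G k) * ∑' k : I, F k)) := by
          ring
      _ ≤ ENNReal.ofReal K₁ * (ENNReal.ofReal K₂ * (W₂ * ∑' k : A, F k)) :=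
          mul_le_mul_right (mul_le_mul_right key _) _
      _ = (ENNReal.ofReal K₂ * W₂) * (ENNReal.ofReal K₁ * ∑' k : A, F k) := by ring
      _ = ENNReal.ofReal W * (ENNReal.ofReal K₁ * ∑' k : A, F k) := by rw [hWeq]
  refine ⟨main, fun heq I hI => ?_⟩
  have h := main I hI
  rw [heq] at h
  exact (ENNReal.mul_le_mul_iff_right (ENNReal.ofReal_pos.2 hW).ne' ENNReal.ofReal_ne_top).1 h
end

section
/- (Combination rule) Let Y be a Banach space, M : ℕ^d → Y, and let I ⊆ ℕ^d be a finite downward closed set (k ∈ I and k' ≤ k componentwise imply k' ∈ I). Then S_I(M) = Σ_{k ∈ I} c_k M(k), where c_k := Σ_{e ∈ {0,1}^d : k+e ∈ I} (−1)^{|e|_1}. -/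
namespace SmolyakAux

variable {d : ℕ} {Y : Type*} [AddCommGroup Y]

/-- sign of a 0/1 vector -/
def sgn (e : Fin d → Bool) : ℤ := (-1) ^ (Finset.univ.filter fun i => e i = true).card

/-- pointwise subtraction of a 0/1 vector -/
def esub (k : Fin d → ℕ) (e : Fin d → Bool) : Fin d → ℕ :=
  fun i => k i - (if e i then 1 else 0)

lemma sgn_update_true (e : Fin d → Bool) (j : Fin d) (h : e j = false) :
    sgn (Function.update e j true) = - sgn e := by
  have hset : (Finset.univ.filter fun i => Function.update e j true i = true)
      = insert j (Finset.univ.filter fun i => e i = true) := by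
    ext i
    by_cases hij : i = j
    · subst hij; simp [Function.update]
    · simp [Function.update, hij]
  have hj : j ∉ (Finset.univ.filter fun i => e i = true) := by simp [h]
  simp [sgn, hset, Finset.card_insert_of_notMem hj, pow_succ, mul_comm]

lemma foldr_diff (M : (Fin d → ℕ) → Y) (l : List (Fin d)) (hl : l.Nodup) (k : Fin d → ℕ) :
    l.foldr (fun j F => diffOp j F) M k
      = ∑ e : Fin d → Bool,
          if (∀ i, e i = true → i ∈ l ∧ k i ≠ 0) then sgn e • M (esub k e) else 0 := by
  induction l generalizing k with
  | nil =>
      rw [Finset.sum_eq_single (fun _ => false)]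
      · have : esub k (fun _ => false) = k := by funext i; simp [esub]
        simp [sgn, this]
      · intro e _ he
        have : ∃ i, e i = true := by
          by_contra hno
          push_neg at hno
          exact he (funext fun i => by simpa using hno i)
        obtain ⟨i, hi⟩ := this
        rw [if_neg]
        intro H
        exact absurd (H i hi).1 List.not_mem_nil
      · simp
  | cons j t ih =>
      have hjt : j ∉ t := (List.nodup_cons.mp hl).1
      have ht : t.Nodup := (List.nodup_cons.mp hl).2
      show diffOp j (t.foldr (fun j F => diffOp j F) M) k = _
      rw [diffOp]
      by_cases hkj : k j = 0
      · rw [if_pos hkj, ih ht k]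
        refine Finset.sum_congr rfl fun e _ => ?_
        refine if_congr ⟨fun H i hi => ⟨List.mem_cons_of_mem _ (H i hi).1, (H i hi).2⟩,
          fun H i hi => ?_⟩ rfl rfl
        have hki := (H i hi).2
        have hij : i ≠ j := fun h' => hki (h' ▸ hkj)
        exact ⟨(List.mem_cons.mp (H i hi).1).resolve_left hij, hki⟩
      · rw [if_neg hkj, ih ht k, ih ht (Function.update k j (k j - 1))]
        set k' := Function.update k j (k j - 1) with hk'
        -- split RHS sum over value of e j
        rw [← Finset.sum_filter_add_sum_filter_not Finset.univ (fun e : Fin d → Bool => e j = true)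
          (fun e => if (∀ i, e i = true → i ∈ (j :: t) ∧ k i ≠ 0) then sgn e • M (esub k e) else 0)]
        have hA : ∑ e ∈ Finset.univ.filter (fun e : Fin d → Bool => ¬ e j = true),
            (if (∀ i, e i = true → i ∈ (j :: t) ∧ k i ≠ 0) then sgn e • M (esub k e) else 0)
            = ∑ e : Fin d → Bool,
            (if (∀ i, e i = true → i ∈ t ∧ k i ≠ 0) then sgn e • M (esub k e) else 0) := by
          rw [Finset.sum_filter]
          refine Finset.sum_congr rfl fun e _ => ?_
          by_cases hej : e j = true
          · rw [if_neg (by simpa using hej), if_neg]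
            intro H
            exact hjt (H j hej).1
          · rw [if_pos (by simpa using hej)]
            refine if_congr ⟨fun H i hi => ?_, fun H i hi =>
              ⟨List.mem_cons_of_mem _ (H i hi).1, (H i hi).2⟩⟩ rfl rfl
            have hij : i ≠ j := fun h' => hej (h' ▸ hi)
            exact ⟨(List.mem_cons.mp (H i hi).1).resolve_left hij, (H i hi).2⟩
        have hB : ∑ e ∈ Finset.univ.filter (fun e : Fin d → Bool => e j = true),
            (if (∀ i, e i = true → i ∈ (j :: t) ∧ k i ≠ 0) then sgn e • M (esub k e) else 0)
            = - ∑ e : Fin d → Bool,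
            (if (∀ i, e i = true → i ∈ t ∧ k' i ≠ 0) then sgn e • M (esub k' e) else 0) := by
          rw [← Finset.sum_filter_add_sum_filter_not Finset.univ (fun e : Fin d → Bool => e j = true)
            (fun e => if (∀ i, e i = true → i ∈ t ∧ k' i ≠ 0) then sgn e • M (esub k' e) else 0)]
          have hzero : ∑ e ∈ Finset.univ.filter (fun e : Fin d → Bool => e j = true),
              (if (∀ i, e i = true → i ∈ t ∧ k' i ≠ 0) then sgn e • M (esub k' e) else 0) = 0 := by
            refine Finset.sum_eq_zero fun e he => ?_
            rw [if_neg]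
            intro H
            exact hjt (H j (Finset.mem_filter.mp he).2).1
          rw [hzero, zero_add, ← Finset.sum_neg_distrib]
          refine Finset.sum_nbij' (fun e => Function.update e j false)
            (fun e => Function.update e j true) ?_ ?_ ?_ ?_ ?_
          · intro e he; simp
          · intro e he; simp
          · intro e he
            have hej : e j = true := by simpa using (Finset.mem_filter.mp he).2
            funext i
            by_cases hij : i = j
            · subst hij; simp [hej]
            · simp [Function.update, hij]
          · intro e he
            have hej : e j = false := by simpa using (Finset.mem_filter.mp he).2
            funext i
            by_cases hij : i = j
            · subst hij; simp [hej]
            · simp [Function.update, hij]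
          · intro e he
            have hej : e j = true := (Finset.mem_filter.mp he).2
            set e' := Function.update e j false with he'
            have he'j : e' j = false := by simp [he']
            have heq : Function.update e' j true = e := by
              funext i
              by_cases hij : i = j
              · subst hij; simp [hej]
              · simp [he', Function.update, hij]
            have hsgn : sgn e = - sgn e' := by
              rw [← heq, sgn_update_true e' j he'j]
            have hsub : esub k e = esub k' e' := by
              funext i
              by_cases hij : i = j
              · subst hij
                simp [esub, hej, he', hk', Function.update_self]
              · simp [esub, he', hk', Function.update_of_ne hij]
            have hcond : (∀ i, e i = true → i ∈ (j :: t) ∧ k i ≠ 0)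
                ↔ (∀ i, e' i = true → i ∈ t ∧ k' i ≠ 0) := by
              constructor
              · intro H i hi
                have hij : i ≠ j := fun h' => by rw [h'] at hi; rw [he'j] at hi; exact Bool.noConfusion hi
                have hie : e i = true := by
                  rw [← hi, he', Function.update_of_ne hij]
                exact ⟨(List.mem_cons.mp (H i hie).1).resolve_left hij,
                  by rw [hk', Function.update_of_ne hij]; exact (H i hie).2⟩
              · intro H i hi
                by_cases hij : i = j
                · subst hij; exact ⟨List.mem_cons_self, hkj⟩
                · have hie : e' i = true := by rw [he', Function.update_of_ne hij]; exact hi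
                  refine ⟨List.mem_cons_of_mem _ (H i hie).1, ?_⟩
                  have := (H i hie).2
                  rwa [hk', Function.update_of_ne hij] at this
            rw [hsub, hsgn]
            show _ = -(if (∀ i, Function.update e j false i = true → i ∈ t ∧ k' i ≠ 0)
              then sgn (Function.update e j false) • M (esub k' (Function.update e j false)) else 0)
            rw [← he']
            by_cases hc : (∀ i, e' i = true → i ∈ t ∧ k' i ≠ 0)
            · rw [if_pos (hcond.mpr hc), if_pos hc, neg_smul]
            · rw [if_neg (fun h => hc (hcond.mp h)), if_neg hc, neg_zero]
        rw [hA, hB]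
        abel


def eadd (k : Fin d → ℕ) (e : Fin d → Bool) : Fin d → ℕ :=
  fun i => k i + (if e i then 1 else 0)

lemma mixDiff_eq (M : (Fin d → ℕ) → Y) (k : Fin d → ℕ) :
    mixDiff M k
      = ∑ e : Fin d → Bool,
          if (∀ i, e i = true → k i ≠ 0) then sgn e • M (esub k e) else 0 := by
  rw [mixDiff, foldr_diff M (List.finRange d) (List.nodup_finRange d) k]
  refine Finset.sum_congr rfl fun e _ => if_congr ?_ rfl rfl
  constructor
  · intro H i hi; exact (H i hi).2
  · intro H i hi; exact ⟨List.mem_finRange i, H i hi⟩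

end SmolyakAux

open SmolyakAux

/-- combination rule: for a finite downward closed `I ⊆ ℕ^d`,
Smolyak's algorithm `S_I(M) = ∑_{k ∈ I} (Δ_mix M)(k)` equals
`∑_{k ∈ I} c_k M(k)` with `c_k = ∑_{e ∈ {0,1}^d, k+e ∈ I} (-1)^{|e|₁}`. -/
theorem smolyak_combination_rule
    {d : ℕ} (hd : 1 ≤ d) {Y : Type*} [NormedAddCommGroup Y] [NormedSpace ℝ Y]
    [CompleteSpace Y] (M : (Fin d → ℕ) → Y)
    (I : Finset (Fin d → ℕ))
    (hI : ∀ k ∈ I, ∀ k' : Fin d → ℕ, (∀ j, k' j ≤ k j) → k' ∈ I) :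
    ∑ k ∈ I, mixDiff M k =
      ∑ k ∈ I,
        (∑ e : Fin d → Bool,
          if (fun j => k j + if e j then 1 else 0) ∈ I
          then (-1 : ℤ) ^ (Finset.univ.filter fun j => e j = true).card
          else 0) • M k := by
  classical
  have hrhs : ∀ k : Fin d → ℕ,
      (∑ e : Fin d → Bool,
          if (fun j => k j + if e j then 1 else 0) ∈ I
          then (-1 : ℤ) ^ (Finset.univ.filter fun j => e j = true).card
          else 0) • M k
      = ∑ e : Fin d → Bool, if eadd k e ∈ I then sgn e • M k else 0 := by
    intro k
    rw [Finset.sum_smul]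
    refine Finset.sum_congr rfl fun e _ => ?_
    rw [ite_smul, zero_smul]
    exact if_congr Iff.rfl rfl rfl
  simp only [hrhs, mixDiff_eq]
  rw [← Finset.sum_product' (s := I) (t := Finset.univ),
    ← Finset.sum_product' (s := I) (t := Finset.univ),
    ← Finset.sum_filter, ← Finset.sum_filter]
  refine Finset.sum_nbij' (fun p => (esub p.1 p.2, p.2)) (fun q => (eadd q.1 q.2, q.2))
    ?_ ?_ ?_ ?_ ?_
  · intro p hp
    rw [Finset.mem_filter, Finset.mem_product] at hp ⊢
    obtain ⟨⟨hpI, -⟩, hcond⟩ := hp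
    have hsub : esub p.1 p.2 ∈ I :=
      hI p.1 hpI _ (fun i => Nat.sub_le _ _)
    refine ⟨⟨hsub, Finset.mem_univ _⟩, ?_⟩
    have : eadd (esub p.1 p.2) p.2 = p.1 := by
      funext i
      by_cases hi : p.2 i = true
      · have := hcond i hi
        simp only [eadd, esub, hi, if_true]
        omega
      · simp [eadd, esub, hi]
    rw [this]
    exact hpI
  · intro q hq
    rw [Finset.mem_filter, Finset.mem_product] at hq ⊢
    obtain ⟨⟨hqI, -⟩, hcond⟩ := hq
    refine ⟨⟨hcond, Finset.mem_univ _⟩, fun i hi => ?_⟩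
    have hi' : q.2 i = true := hi
    simp only [eadd, hi', if_true]
    omega
  · intro p hp
    rw [Finset.mem_filter] at hp
    obtain ⟨-, hcond⟩ := hp
    refine Prod.ext ?_ rfl
    funext i
    by_cases hi : p.2 i = true
    · have := hcond i hi
      simp only [eadd, esub, hi, if_true]
      omega
    · simp [eadd, esub, hi]
  · intro q hq
    refine Prod.ext ?_ rfl
    funext i
    by_cases hi : q.2 i = true
    · simp only [eadd, esub, hi, if_true]
      omega
    · simp [eadd, esub, hi]
  · intro p hp
    rfl
end

section
/- (Combination coefficients for the simplex) Let d ≥ 1, L ∈ ℕ, and I := {k ∈ ℕ^d : |k|_1 ≤ L} where |k|_1 := k_1 + ⋯ + k_d. Then the combination coefficients c_k := Σ_{e ∈ {0,1}^d : k+e ∈ I} (−1)^{|e|_1} satisfy c_k = (−1)^{L−|k|_1} · binomial(d−1, L−|k|_1) if L−d+1 ≤ |k|_1 ≤ L, and c_k = 0 for all other k ∈ ℕ^d. -/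
private lemma sum_bool_card_eq {d : ℕ} (g : ℕ → ℤ) :
    ∑ e : Fin d → Bool, g (Finset.univ.filter fun j => e j = true).card
      = ∑ i ∈ Finset.range (d+1), (d.choose i : ℤ) * g i := by
  have h1 : ∑ e : Fin d → Bool, g (Finset.univ.filter fun j => e j = true).card
      = ∑ s : Finset (Fin d), g s.card := by
    refine (Fintype.sum_bijective (fun s : Finset (Fin d) => fun j => decide (j ∈ s)) ?_ _ _ ?_).symm
    · constructor
      · intro s t h
        ext j
        have := congrFun h j
        simpa using this
      · intro e
        exact ⟨Finset.univ.filter fun j => e j = true, by ext j; simp⟩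
    · intro s
      congr 1
      congr 1
      ext j; simp
  rw [h1, ← Finset.powerset_univ, Finset.sum_powerset]
  simp [Finset.sum_powersetCard]

private lemma alt_partial_sum (d' m : ℕ) :
    ∑ i ∈ Finset.range (m+1), ((d'+1).choose i : ℤ) * (-1)^i
      = (-1)^m * (d'.choose m : ℤ) := by
  induction m with
  | zero => simp
  | succ m ih =>
    rw [Finset.sum_range_succ, ih, Nat.choose_succ_succ' d' m]
    push_cast
    ring

/-- combination coefficients for the simplex: for
`I = {k ∈ ℕ^d : |k|₁ ≤ L}`, the combination coefficients
`c_k = ∑_{e ∈ {0,1}^d, k+e ∈ I} (-1)^{|e|₁}` are given by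
`c_k = (-1)^{L-|k|₁} C(d-1, L-|k|₁)` if `L-d+1 ≤ |k|₁ ≤ L` and `c_k = 0` otherwise. -/
theorem combination_coefficients_simplex
    {d : ℕ} (hd : 1 ≤ d) (L : ℕ) (k : Fin d → ℕ) :
    (∑ e : Fin d → Bool,
      if (∑ j, (k j + if e j then 1 else 0)) ≤ L
      then (-1 : ℤ) ^ (Finset.univ.filter fun j => e j = true).card
      else 0) =
    (if (∑ j, k j) ≤ L ∧ L + 1 ≤ (∑ j, k j) + d
      then (-1 : ℤ) ^ (L - ∑ j, k j) * (Nat.choose (d - 1) (L - ∑ j, k j) : ℤ)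
      else 0) := by
  obtain ⟨d', rfl⟩ : ∃ d', d = d' + 1 := ⟨d - 1, (Nat.succ_pred_eq_of_pos hd).symm⟩
  set s := ∑ j, k j with hs
  have hsum : ∀ e : Fin (d'+1) → Bool,
      (∑ j, (k j + if e j then 1 else 0))
        = s + (Finset.univ.filter fun j => e j = true).card := by
    intro e
    rw [Finset.sum_add_distrib]
    congr 1
    simp [Finset.sum_boole]
  have hmain : (∑ e : Fin (d'+1) → Bool,
      if (∑ j, (k j + if e j then 1 else 0)) ≤ L
      then (-1 : ℤ) ^ (Finset.univ.filter fun j => e j = true).card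
      else 0)
      = ∑ i ∈ Finset.range (d'+1+1), ((d'+1).choose i : ℤ) *
          (if s + i ≤ L then (-1:ℤ)^i else 0) := by
    rw [← sum_bool_card_eq (fun i => if s + i ≤ L then (-1:ℤ)^i else 0)]
    refine Finset.sum_congr rfl fun e _ => ?_
    rw [hsum e]
  rw [hmain]
  clear_value s
  clear hsum hmain
  by_cases hsL : s ≤ L
  · have hm : ∀ i, (s + i ≤ L) ↔ i ≤ L - s := fun i => by omega
    by_cases hcase : L + 1 ≤ s + (d'+1)
    · -- L - s ≤ d'
      have hLd : L - s ≤ d' := by omega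
      rw [if_pos ⟨hsL, hcase⟩]
      have hsubset : Finset.range (L - s + 1) ⊆ Finset.range (d'+1+1) :=
        Finset.range_subset_range.2 (by omega)
      rw [← Finset.sum_subset hsubset (fun i hi hni => by
        rw [if_neg, mul_zero]
        simp only [Finset.mem_range] at hi hni
        omega)]
      have : ∀ i ∈ Finset.range (L - s + 1),
          ((d'+1).choose i : ℤ) * (if s + i ≤ L then (-1:ℤ)^i else 0)
            = ((d'+1).choose i : ℤ) * (-1)^i := fun i hi => by
        rw [if_pos]
        simp only [Finset.mem_range] at hi
        omega
      rw [Finset.sum_congr rfl this, alt_partial_sum]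
      simp
    · -- L - s ≥ d' + 1, full alternating sum
      rw [if_neg (by omega)]
      have : ∀ i ∈ Finset.range (d'+1+1),
          ((d'+1).choose i : ℤ) * (if s + i ≤ L then (-1:ℤ)^i else 0)
            = (-1:ℤ)^i * ((d'+1).choose i : ℤ) := fun i hi => by
        rw [if_pos (by simp only [Finset.mem_range] at hi; omega)]
        ring
      rw [Finset.sum_congr rfl this, Int.alternating_sum_range_choose]
      simp
  · rw [if_neg (by omega)]
    refine Finset.sum_eq_zero fun i _ => ?_
    rw [if_neg (by omega), mul_zero]
end

section
/- (Exponential sum bound, work estimate) Let d ≥ 1, β_j > 0, γ_j > 0, γ'_j ≥ 0 for j = 1,…,d, set ρ := max_{1≤j≤d} γ_j/β_j, J := {j : γ_j/β_j = ρ}, d* := |J|, and γ'* := Σ_{j∈J} γ'_j. Then there exists a constant C > 0, depending only on β, γ, γ', and d, such that for all L ≥ 0: Σ_{k ∈ ℕ^d : Σ_j (β_j+γ_j)k_j ≤ L} exp(Σ_j γ_j k_j) ∏_{j=1}^d (k_j+1)^{γ'_j} ≤ C exp(ρL/(1+ρ)) (L+1)^{d*−1+γ'*}. -/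
open scoped Classical


private lemma geom_bound {r : ℝ} (h0 : 0 ≤ r) (h1 : r < 1) (T : Finset ℕ) :
    ∑ x ∈ T, r ^ x ≤ (1 - r)⁻¹ := by
  have hsub : T ⊆ Finset.range (T.sup id + 1) := fun x hx =>
    Finset.mem_range.mpr (Nat.lt_succ_of_le (Finset.le_sup (f := id) hx))
  have h2 : ∑ x ∈ T, r ^ x ≤ ∑ x ∈ Finset.range (T.sup id + 1), r ^ x :=
    Finset.sum_le_sum_of_subset_of_nonneg hsub fun i _ _ => pow_nonneg h0 i
  refine h2.trans ?_
  set n := T.sup id + 1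
  have hden : 0 < 1 - r := by linarith
  rw [geom_sum_eq h1.ne n]
  have he : (r ^ n - 1) / (r - 1) = (1 - r ^ n) / (1 - r) := by
    rw [← neg_div_neg_eq]; ring_nf
  rw [he, inv_eq_one_div]
  have hnum : 1 - r ^ n ≤ 1 := by nlinarith [pow_nonneg h0 n]
  exact div_le_div_of_nonneg_right hnum hden.le

private lemma inner_geom {a0 θ : ℝ} (ha : 0 < a0) (hθ : 0 < θ) (M : ℝ) (T : Finset ℕ) :
    ∑ x ∈ T, (if a0 * (x : ℝ) ≤ M then Real.exp (θ * (a0 * x)) else 0)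
      ≤ (1 - Real.exp (-(θ * a0)))⁻¹ * Real.exp (θ * M) := by
  have hr0 : 0 < Real.exp (-(θ * a0)) := Real.exp_pos _
  have hr1 : Real.exp (-(θ * a0)) < 1 := by
    rw [Real.exp_lt_one_iff]; nlinarith
  have hden : 0 < 1 - Real.exp (-(θ * a0)) := by linarith
  by_cases hM : M < 0
  · have hz : ∀ x ∈ T, (if a0 * (x : ℝ) ≤ M then Real.exp (θ * (a0 * x)) else 0) = 0 := by
      intro x _
      rw [if_neg]
      intro h
      have : (0:ℝ) ≤ a0 * x := by positivity
      linarith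
    rw [Finset.sum_congr rfl hz, Finset.sum_const, smul_zero]
    positivity
  push_neg at hM
  set m := Nat.floor (M / a0) with hm
  have hfm : a0 * (m : ℝ) ≤ M := by
    have h := Nat.floor_le (by positivity : (0:ℝ) ≤ M / a0)
    rw [← hm] at h
    calc a0 * (m:ℝ) ≤ a0 * (M / a0) := by nlinarith
    _ = M := by field_simp
  have step1 : ∑ x ∈ T, (if a0 * (x : ℝ) ≤ M then Real.exp (θ * (a0 * x)) else 0)
      = ∑ x ∈ T.filter (fun x : ℕ => a0 * (x : ℝ) ≤ M), Real.exp (θ * (a0 * x)) :=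
    (Finset.sum_filter _ _).symm
  rw [step1]
  have hsub : T.filter (fun x : ℕ => a0 * (x : ℝ) ≤ M) ⊆ Finset.range (m + 1) := by
    intro x hx
    rw [Finset.mem_filter] at hx
    rw [Finset.mem_range, Nat.lt_succ_iff]
    apply Nat.le_floor
    rw [le_div_iff₀ ha]
    linarith [hx.2]
  have hpt : ∀ x ∈ T.filter (fun x : ℕ => a0 * (x : ℝ) ≤ M),
      Real.exp (θ * (a0 * x)) ≤ Real.exp (θ * M) * Real.exp (-(θ * a0)) ^ (m - x) := by
    intro x hx
    rw [Finset.mem_filter] at hx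
    have hxm : x ≤ m := by
      apply Nat.le_floor; rw [le_div_iff₀ ha]; linarith [hx.2]
    rw [← Real.exp_nat_mul, ← Real.exp_add]
    apply Real.exp_le_exp.mpr
    have hcast : ((m - x : ℕ) : ℝ) = (m : ℝ) - x := by
      rw [Nat.cast_sub hxm]
    rw [hcast]
    nlinarith
  have hreflect : ∑ x ∈ Finset.range (m + 1), Real.exp (-(θ * a0)) ^ (m - x)
      = ∑ i ∈ Finset.range (m + 1), Real.exp (-(θ * a0)) ^ i := by
    have := Finset.sum_range_reflect (fun i => Real.exp (-(θ * a0)) ^ i) (m + 1)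
    simpa using this
  calc ∑ x ∈ T.filter (fun x : ℕ => a0 * (x : ℝ) ≤ M), Real.exp (θ * (a0 * x))
      ≤ ∑ x ∈ T.filter (fun x : ℕ => a0 * (x : ℝ) ≤ M),
          Real.exp (θ * M) * Real.exp (-(θ * a0)) ^ (m - x) := Finset.sum_le_sum hpt
    _ ≤ ∑ x ∈ Finset.range (m + 1), Real.exp (θ * M) * Real.exp (-(θ * a0)) ^ (m - x) :=
        Finset.sum_le_sum_of_subset_of_nonneg hsub (fun i _ _ => by positivity)
    _ = Real.exp (θ * M) * ∑ x ∈ Finset.range (m + 1), Real.exp (-(θ * a0)) ^ (m - x) := by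
        rw [Finset.mul_sum]
    _ = Real.exp (θ * M) * ∑ i ∈ Finset.range (m + 1), Real.exp (-(θ * a0)) ^ i := by
        rw [hreflect]
    _ ≤ Real.exp (θ * M) * (1 - Real.exp (-(θ * a0)))⁻¹ := by
        have := geom_bound hr0.le hr1 (Finset.range (m+1))
        nlinarith [Real.exp_pos (θ * M)]
    _ = (1 - Real.exp (-(θ * a0)))⁻¹ * Real.exp (θ * M) := by ring

private lemma log_lin {ε : ℝ} (hε : 0 < ε) (v : ℕ) :
    Real.log ((v : ℝ) + 1) ≤ ε * v + ε - Real.log ε := by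
  have h1 : Real.log ((v:ℝ)+1) = Real.log (ε * ((v:ℝ)+1)) - Real.log ε := by
    rw [Real.log_mul hε.ne' (by positivity)]; ring
  have h2 : Real.log (ε * ((v:ℝ)+1)) ≤ ε * ((v:ℝ)+1) - 1 := Real.log_le_sub_one_of_pos (by positivity)
  nlinarith


private def recomb {d : ℕ} (j0 : Fin d) (p : ℕ × ({j : Fin d // j ≠ j0} → ℕ)) : Fin d → ℕ :=
  fun j => if h : j = j0 then p.1 else p.2 ⟨j, h⟩

private lemma recomb_same {d : ℕ} (j0 : Fin d) (p : ℕ × ({j : Fin d // j ≠ j0} → ℕ)) :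
    recomb j0 p j0 = p.1 := dif_pos rfl

private lemma recomb_ne {d : ℕ} (j0 : Fin d) (p : ℕ × ({j : Fin d // j ≠ j0} → ℕ))
    {j : Fin d} (h : j ≠ j0) : recomb j0 p j = p.2 ⟨j, h⟩ := dif_neg h

private lemma sum_split {d : ℕ} (j0 : Fin d) (φ : Fin d → ℕ → ℝ) (x : ℕ)
    (y : {j : Fin d // j ≠ j0} → ℕ) :
    ∑ j, φ j (recomb j0 (x, y) j) = φ j0 x + ∑ j : {j : Fin d // j ≠ j0}, φ j.1 (y j) := by
  rw [← Finset.add_sum_erase _ _ (Finset.mem_univ j0), recomb_same]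
  congr 1
  rw [Finset.sum_subtype (p := fun j => j ≠ j0) (Finset.univ.erase j0)
    (by intro x; simp [Finset.mem_erase]) (fun j => φ j (recomb j0 (x, y) j))]
  apply Finset.sum_congr rfl
  intro j _
  rw [recomb_ne j0 (x, y) j.2]

private lemma prod_split {d : ℕ} (j0 : Fin d) (φ : Fin d → ℕ → ℝ) (x : ℕ)
    (y : {j : Fin d // j ≠ j0} → ℕ) :
    ∏ j, φ j (recomb j0 (x, y) j) = φ j0 x * ∏ j : {j : Fin d // j ≠ j0}, φ j.1 (y j) := by
  rw [← Finset.mul_prod_erase _ _ (Finset.mem_univ j0), recomb_same]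
  congr 1
  rw [Finset.prod_subtype (p := fun j => j ≠ j0) (Finset.univ.erase j0)
    (by intro x; simp [Finset.mem_erase]) (fun j => φ j (recomb j0 (x, y) j))]
  apply Finset.prod_congr rfl
  intro j _
  rw [recomb_ne j0 (x, y) j.2]


private lemma main_sum_bound {d : ℕ} (a g g' : Fin d → ℝ) (θ L : ℝ) (j0 : Fin d)
    (Bnd : Fin d → ℝ)
    (ha : ∀ j, 0 < a j) (hθ : 0 < θ) (hg' : ∀ j, 0 ≤ g' j) (hL : 0 ≤ L)
    (heq : g j0 = θ * a j0)
    (hB0 : ∀ x : ℕ, (x : ℝ) ≤ L / a j0 → ((x : ℝ) + 1) ^ (g' j0) ≤ Bnd j0)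
    (hB : ∀ j, j ≠ j0 →
      ∑ v ∈ Finset.range (⌊L / a j⌋₊ + 1),
        Real.exp ((g j - θ * a j) * v) * ((v : ℝ) + 1) ^ (g' j) ≤ Bnd j)
    (s : Finset (Fin d → ℕ)) :
    ∑ k ∈ s, (if ∑ j, a j * (k j : ℝ) ≤ L
        then Real.exp (∑ j, g j * (k j : ℝ)) * ∏ j, ((k j : ℝ) + 1) ^ (g' j) else 0)
      ≤ (1 - Real.exp (-(θ * a j0)))⁻¹ * Real.exp (θ * L) * ∏ j, Bnd j := by
  classical
  have hBnn : ∀ j, 0 ≤ Bnd j := by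
    intro j
    by_cases hj : j = j0
    · subst hj
      have h0 : ((0:ℕ):ℝ) ≤ L / a j := by simpa using div_nonneg hL (ha j).le
      have h1 := hB0 0 h0
      have h2 : (0:ℝ) ≤ (((0:ℕ):ℝ) + 1) ^ (g' j) := by positivity
      linarith
    · have h1 : (0:ℝ) ≤ ∑ v ∈ Finset.range (⌊L / a j⌋₊ + 1),
          Real.exp ((g j - θ * a j) * v) * ((v : ℝ) + 1) ^ (g' j) :=
        Finset.sum_nonneg fun v _ => by positivity
      linarith [hB j hj]
  set t : Fin d → Finset ℕ := fun j => Finset.range (⌊L / a j⌋₊ + 1) with ht_def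
  set F : (Fin d → ℕ) → ℝ := fun k => if ∑ j, a j * (k j : ℝ) ≤ L
      then Real.exp (∑ j, g j * (k j : ℝ)) * ∏ j, ((k j : ℝ) + 1) ^ (g' j) else 0 with hF_def
  have hFnn : ∀ k, 0 ≤ F k := by
    intro k
    rw [hF_def]
    dsimp only
    split
    · positivity
    · exact le_refl 0
  have hsupp : ∀ k : Fin d → ℕ, k ∉ Fintype.piFinset t → F k = 0 := by
    intro k hk
    rw [Fintype.mem_piFinset] at hk
    push_neg at hk
    obtain ⟨j, hj⟩ := hk
    have hkj : ⌊L / a j⌋₊ < k j := by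
      rw [ht_def] at hj
      simpa [Finset.mem_range, Nat.lt_succ_iff, not_le] using hj
    have h1 : L / a j < (k j : ℝ) :=
      (Nat.floor_lt (div_nonneg hL (ha j).le)).mp hkj
    have hgt : L < a j * (k j : ℝ) := by
      have h2 := (div_lt_iff₀ (ha j)).mp h1
      linarith [h2]
    rw [hF_def]
    dsimp only
    rw [if_neg]
    intro hcon
    have h2 : a j * (k j : ℝ) ≤ ∑ j', a j' * (k j' : ℝ) :=
      Finset.single_le_sum (f := fun j' => a j' * (k j' : ℝ))
        (fun i _ => mul_nonneg (ha i).le (Nat.cast_nonneg _)) (Finset.mem_univ j)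
    linarith
  have stepA : ∑ k ∈ s, F k ≤ ∑ k ∈ Fintype.piFinset t, F k := by
    have h1 : ∑ k ∈ s.filter (· ∈ Fintype.piFinset t), F k = ∑ k ∈ s, F k :=
      Finset.sum_filter_of_ne (fun x _ hne => by
        by_contra hmem
        exact hne (hsupp x hmem))
    rw [← h1]
    exact Finset.sum_le_sum_of_subset_of_nonneg
      (fun k hk => (Finset.mem_filter.mp hk).2) (fun k _ _ => hFnn k)
  refine stepA.trans ?_
  -- reindex
  have stepB : ∑ k ∈ Fintype.piFinset t, F k
      = ∑ p ∈ (t j0) ×ˢ Fintype.piFinset (fun j : {j : Fin d // j ≠ j0} => t j.1),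
          F (recomb j0 p) := by
    apply Finset.sum_nbij' (i := fun k => (k j0, fun j : {j : Fin d // j ≠ j0} => k j.1))
      (j := recomb j0)
    · intro k hk
      rw [Fintype.mem_piFinset] at hk
      rw [Finset.mem_product]
      exact ⟨hk j0, Fintype.mem_piFinset.mpr fun j => hk j.1⟩
    · intro p hp
      rw [Finset.mem_product] at hp
      rw [Fintype.mem_piFinset]
      intro j
      by_cases h : j = j0
      · subst h; rw [recomb_same]; exact hp.1
      · rw [recomb_ne j0 p h]
        exact Fintype.mem_piFinset.mp hp.2 ⟨j, h⟩
    · intro k _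
      funext j
      by_cases h : j = j0
      · subst h; rw [recomb_same]
      · rw [recomb_ne j0 _ h]
    · intro p hp
      ext j
      · rw [recomb_same]
      · show recomb j0 p j.1 = p.2 j
        rw [recomb_ne j0 p j.2]
    · intro k _
      congr 1
      funext j
      by_cases h : j = j0
      · subst h; rw [recomb_same]
      · rw [recomb_ne j0 _ h]
  rw [stepB, Finset.sum_product, Finset.sum_comm]
  have hden : 0 < 1 - Real.exp (-(θ * a j0)) := by
    have : Real.exp (-(θ * a j0)) < 1 := by
      rw [Real.exp_lt_one_iff]
      have := mul_pos hθ (ha j0); linarith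
    linarith
  have hy : ∀ y ∈ Fintype.piFinset (fun j : {j : Fin d // j ≠ j0} => t j.1),
      ∑ x ∈ t j0, F (recomb j0 (x, y))
        ≤ (1 - Real.exp (-(θ * a j0)))⁻¹ * Real.exp (θ * L) *
            (Bnd j0 * ∏ j : {j : Fin d // j ≠ j0},
              (Real.exp ((g j.1 - θ * a j.1) * (y j : ℝ)) * ((y j : ℝ) + 1) ^ (g' j.1))) := by
    intro y _
    have hRnn : 0 ≤ ∑ j : {j : Fin d // j ≠ j0}, a j.1 * (y j : ℝ) :=
      Finset.sum_nonneg fun j _ => mul_nonneg (ha j.1).le (Nat.cast_nonneg _)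
    have hPnn : 0 ≤ ∏ j : {j : Fin d // j ≠ j0}, ((y j : ℝ) + 1) ^ (g' j.1) :=
      Finset.prod_nonneg fun j _ => by positivity
    have hpt : ∀ x ∈ t j0, F (recomb j0 (x, y)) ≤
        (if a j0 * (x : ℝ) ≤ L - ∑ j : {j : Fin d // j ≠ j0}, a j.1 * (y j : ℝ)
          then Real.exp (θ * (a j0 * x)) else 0)
          * (Bnd j0 * (Real.exp (∑ j : {j : Fin d // j ≠ j0}, g j.1 * (y j : ℝ))
              * ∏ j : {j : Fin d // j ≠ j0}, ((y j : ℝ) + 1) ^ (g' j.1))) := by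
      intro x hx
      have e1 := sum_split j0 (fun j v => a j * (v : ℝ)) x y
      have e2 := sum_split j0 (fun j v => g j * (v : ℝ)) x y
      have e3 := prod_split j0 (fun j v => ((v : ℝ) + 1) ^ (g' j)) x y
      have hFr : F (recomb j0 (x, y)) =
          if a j0 * (x : ℝ) + ∑ j : {j : Fin d // j ≠ j0}, a j.1 * (y j : ℝ) ≤ L
          then Real.exp (g j0 * x + ∑ j : {j : Fin d // j ≠ j0}, g j.1 * (y j : ℝ))
            * (((x : ℝ) + 1) ^ (g' j0) * ∏ j : {j : Fin d // j ≠ j0}, ((y j : ℝ) + 1) ^ (g' j.1))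
          else 0 := by
        rw [hF_def]
        simp only []
        rw [e1, e2, e3]
      rw [hFr]
      by_cases hcond : a j0 * (x : ℝ) + ∑ j : {j : Fin d // j ≠ j0}, a j.1 * (y j : ℝ) ≤ L
      · rw [if_pos hcond, if_pos (by linarith)]
        have hxdiv : (x : ℝ) ≤ L / a j0 := by
          rw [le_div_iff₀ (ha j0), mul_comm]
          linarith [hRnn]
        have hxB := hB0 x hxdiv
        have hee : Real.exp (g j0 * x + ∑ j : {j : Fin d // j ≠ j0}, g j.1 * (y j : ℝ))
            = Real.exp (θ * (a j0 * x))
              * Real.exp (∑ j : {j : Fin d // j ≠ j0}, g j.1 * (y j : ℝ)) := by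
          rw [← Real.exp_add, heq]
          congr 1
          ring
        rw [hee]
        calc Real.exp (θ * (a j0 * x))
              * Real.exp (∑ j : {j : Fin d // j ≠ j0}, g j.1 * (y j : ℝ))
              * (((x : ℝ) + 1) ^ (g' j0) * ∏ j : {j : Fin d // j ≠ j0}, ((y j : ℝ) + 1) ^ (g' j.1))
            = Real.exp (θ * (a j0 * x)) * (((x : ℝ) + 1) ^ (g' j0)
                * (Real.exp (∑ j : {j : Fin d // j ≠ j0}, g j.1 * (y j : ℝ))
                  * ∏ j : {j : Fin d // j ≠ j0}, ((y j : ℝ) + 1) ^ (g' j.1))) := by ring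
          _ ≤ Real.exp (θ * (a j0 * x)) * (Bnd j0
                * (Real.exp (∑ j : {j : Fin d // j ≠ j0}, g j.1 * (y j : ℝ))
                  * ∏ j : {j : Fin d // j ≠ j0}, ((y j : ℝ) + 1) ^ (g' j.1))) := by
              apply mul_le_mul_of_nonneg_left _ (Real.exp_pos _).le
              exact mul_le_mul_of_nonneg_right hxB (mul_nonneg (Real.exp_pos _).le hPnn)
      · rw [if_neg hcond, if_neg (fun h => hcond (by linarith)), zero_mul]
    calc ∑ x ∈ t j0, F (recomb j0 (x, y))
        ≤ ∑ x ∈ t j0, (if a j0 * (x : ℝ) ≤ L - ∑ j : {j : Fin d // j ≠ j0}, a j.1 * (y j : ℝ)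
            then Real.exp (θ * (a j0 * x)) else 0)
            * (Bnd j0 * (Real.exp (∑ j : {j : Fin d // j ≠ j0}, g j.1 * (y j : ℝ))
              * ∏ j : {j : Fin d // j ≠ j0}, ((y j : ℝ) + 1) ^ (g' j.1))) := Finset.sum_le_sum hpt
      _ = (∑ x ∈ t j0, if a j0 * (x : ℝ) ≤ L - ∑ j : {j : Fin d // j ≠ j0}, a j.1 * (y j : ℝ)
            then Real.exp (θ * (a j0 * x)) else 0)
            * (Bnd j0 * (Real.exp (∑ j : {j : Fin d // j ≠ j0}, g j.1 * (y j : ℝ))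
              * ∏ j : {j : Fin d // j ≠ j0}, ((y j : ℝ) + 1) ^ (g' j.1))) := by
          rw [Finset.sum_mul]
      _ ≤ ((1 - Real.exp (-(θ * a j0)))⁻¹
              * Real.exp (θ * (L - ∑ j : {j : Fin d // j ≠ j0}, a j.1 * (y j : ℝ))))
            * (Bnd j0 * (Real.exp (∑ j : {j : Fin d // j ≠ j0}, g j.1 * (y j : ℝ))
              * ∏ j : {j : Fin d // j ≠ j0}, ((y j : ℝ) + 1) ^ (g' j.1))) := by
          apply mul_le_mul_of_nonneg_right (inner_geom (ha j0) hθ _ _)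
          exact mul_nonneg (hBnn j0) (mul_nonneg (Real.exp_pos _).le hPnn)
      _ = (1 - Real.exp (-(θ * a j0)))⁻¹ * Real.exp (θ * L) *
            (Bnd j0 * ∏ j : {j : Fin d // j ≠ j0},
              (Real.exp ((g j.1 - θ * a j.1) * (y j : ℝ)) * ((y j : ℝ) + 1) ^ (g' j.1))) := by
          have hprod : ∏ j : {j : Fin d // j ≠ j0},
              (Real.exp ((g j.1 - θ * a j.1) * (y j : ℝ)) * ((y j : ℝ) + 1) ^ (g' j.1))
              = Real.exp ((∑ j : {j : Fin d // j ≠ j0}, g j.1 * (y j : ℝ))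
                  - θ * ∑ j : {j : Fin d // j ≠ j0}, a j.1 * (y j : ℝ))
                * ∏ j : {j : Fin d // j ≠ j0}, ((y j : ℝ) + 1) ^ (g' j.1) := by
            rw [Finset.prod_mul_distrib, ← Real.exp_sum]
            congr 2
            rw [Finset.mul_sum, ← Finset.sum_sub_distrib]
            apply Finset.sum_congr rfl
            intro j _
            ring
          have hexp : Real.exp (θ * (L - ∑ j : {j : Fin d // j ≠ j0}, a j.1 * (y j : ℝ)))
              * Real.exp (∑ j : {j : Fin d // j ≠ j0}, g j.1 * (y j : ℝ))
              = Real.exp (θ * L)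
              * Real.exp ((∑ j : {j : Fin d // j ≠ j0}, g j.1 * (y j : ℝ))
                  - θ * ∑ j : {j : Fin d // j ≠ j0}, a j.1 * (y j : ℝ)) := by
            rw [← Real.exp_add, ← Real.exp_add]
            congr 1
            ring
          rw [hprod]
          linear_combination ((1 - Real.exp (-(θ * a j0)))⁻¹ * Bnd j0
            * ∏ j : {j : Fin d // j ≠ j0}, ((y j : ℝ) + 1) ^ (g' j.1)) * hexp
  calc ∑ y ∈ Fintype.piFinset (fun j : {j : Fin d // j ≠ j0} => t j.1),
        ∑ x ∈ t j0, F (recomb j0 (x, y))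
      ≤ ∑ y ∈ Fintype.piFinset (fun j : {j : Fin d // j ≠ j0} => t j.1),
          (1 - Real.exp (-(θ * a j0)))⁻¹ * Real.exp (θ * L) *
            (Bnd j0 * ∏ j : {j : Fin d // j ≠ j0},
              (Real.exp ((g j.1 - θ * a j.1) * (y j : ℝ)) * ((y j : ℝ) + 1) ^ (g' j.1))) :=
        Finset.sum_le_sum hy
    _ = (1 - Real.exp (-(θ * a j0)))⁻¹ * Real.exp (θ * L) * Bnd j0 *
          ∑ y ∈ Fintype.piFinset (fun j : {j : Fin d // j ≠ j0} => t j.1),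
            ∏ j : {j : Fin d // j ≠ j0},
              (Real.exp ((g j.1 - θ * a j.1) * (y j : ℝ)) * ((y j : ℝ) + 1) ^ (g' j.1)) := by
        rw [← Finset.mul_sum, ← Finset.mul_sum, ← mul_assoc]
    _ = (1 - Real.exp (-(θ * a j0)))⁻¹ * Real.exp (θ * L) * Bnd j0 *
          ∏ j : {j : Fin d // j ≠ j0}, ∑ v ∈ t j.1,
            (Real.exp ((g j.1 - θ * a j.1) * (v : ℝ)) * ((v : ℝ) + 1) ^ (g' j.1)) := by
        have hfac : (∑ y ∈ Fintype.piFinset (fun j : {j : Fin d // j ≠ j0} => t j.1),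
            ∏ j : {j : Fin d // j ≠ j0},
              (Real.exp ((g j.1 - θ * a j.1) * (y j : ℝ)) * ((y j : ℝ) + 1) ^ (g' j.1)))
            = ∏ j : {j : Fin d // j ≠ j0}, ∑ v ∈ t j.1,
              (Real.exp ((g j.1 - θ * a j.1) * (v : ℝ)) * ((v : ℝ) + 1) ^ (g' j.1)) :=
          (Finset.prod_univ_sum (fun j : {j : Fin d // j ≠ j0} => t j.1)
            (fun (j : {j : Fin d // j ≠ j0}) (v : ℕ) =>
              Real.exp ((g j.1 - θ * a j.1) * (v : ℝ)) * ((v : ℝ) + 1) ^ (g' j.1))).symm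
        rw [hfac]
    _ ≤ (1 - Real.exp (-(θ * a j0)))⁻¹ * Real.exp (θ * L) * Bnd j0 *
          ∏ j : {j : Fin d // j ≠ j0}, Bnd j.1 := by
        apply mul_le_mul_of_nonneg_left _ ?_
        · apply Finset.prod_le_prod
          · intro j _
            exact Finset.sum_nonneg fun v _ => by positivity
          · intro j _
            have := hB j.1 j.2
            simpa [ht_def] using this
        · exact mul_nonneg (mul_nonneg (inv_nonneg.mpr hden.le) (Real.exp_pos _).le) (hBnn j0)
    _ = (1 - Real.exp (-(θ * a j0)))⁻¹ * Real.exp (θ * L) * ∏ j, Bnd j := by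
        rw [← Finset.mul_prod_erase _ _ (Finset.mem_univ j0),
          Finset.prod_subtype (p := fun j => j ≠ j0) (Finset.univ.erase j0)
            (by intro x; simp [Finset.mem_erase]) Bnd]
        ring

set_option maxHeartbeats 1000000 in
/-- exponential sum bound, work estimate: with
`ρ = max_j γ_j/β_j`, `J = {j : γ_j/β_j = ρ}`, `d* = |J|`, `γ'* = ∑_{j∈J} γ'_j`,
there is `C = C(β,γ,γ',d) > 0` such that for every `L ≥ 0`
`∑_{(β+γ)·k ≤ L} exp(γ·k) ∏_j (k_j+1)^{γ'_j} ≤ C exp(ρL/(1+ρ)) (L+1)^{d*-1+γ'*}`. -/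
theorem exponential_sum_work_bound
    {d : ℕ} (hd : 1 ≤ d) (β γ γ' : Fin d → ℝ)
    (hβ : ∀ j, 0 < β j) (hγ : ∀ j, 0 < γ j) (hγ' : ∀ j, 0 ≤ γ' j)
    (ρ : ℝ) (hρmem : ∃ j, γ j / β j = ρ) (hρub : ∀ j, γ j / β j ≤ ρ) :
    ∃ C > (0 : ℝ), ∀ L : ℝ, 0 ≤ L →
      (∑' k : Fin d → ℕ,
        if ∑ j, (β j + γ j) * (k j : ℝ) ≤ L
        then Real.exp (∑ j, γ j * (k j : ℝ)) * ∏ j, ((k j : ℝ) + 1) ^ (γ' j)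
        else 0) ≤
      C * Real.exp (ρ / (1 + ρ) * L) *
        (L + 1) ^
          (((Finset.univ.filter fun j => γ j / β j = ρ).card : ℝ) - 1 +
            ∑ j ∈ Finset.univ.filter fun j => γ j / β j = ρ, γ' j) := by
  obtain ⟨j0, hj0⟩ := hρmem
  have hρ0 : 0 < ρ := hj0 ▸ div_pos (hγ j0) (hβ j0)
  have h1ρ : 0 < 1 + ρ := by linarith
  have hθ0 : 0 < ρ / (1 + ρ) := div_pos hρ0 h1ρ
  have ha : ∀ j, 0 < β j + γ j := fun j => add_pos (hβ j) (hγ j)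
  have hγeq : ∀ j, γ j / β j = ρ → γ j = ρ / (1 + ρ) * (β j + γ j) := by
    intro j hj
    have hb := hβ j
    have h : γ j = ρ * β j := by
      rw [div_eq_iff hb.ne'] at hj
      linarith [hj]
    rw [div_mul_eq_mul_div, eq_div_iff h1ρ.ne']
    nlinarith
  have hγlt : ∀ j, ¬(γ j / β j = ρ) → γ j < ρ / (1 + ρ) * (β j + γ j) := by
    intro j hj
    have hb := hβ j
    have h := (div_lt_iff₀ hb).mp (lt_of_le_of_ne (hρub j) hj)
    rw [div_mul_eq_mul_div, lt_div_iff₀ h1ρ]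
    nlinarith
  set c : Fin d → ℝ := fun j => ρ / (1 + ρ) * (β j + γ j) - γ j with hc_def
  set K : Fin d → ℝ := fun j => max (β j + γ j)⁻¹ 1 with hK_def
  set ε : Fin d → ℝ := fun j => c j / (2 * (γ' j + 1)) with hε_def
  set W : Fin d → ℝ := fun j => if γ j / β j = ρ then K j ^ (1 + γ' j)
      else Real.exp (γ' j * (ε j - Real.log (ε j))) * (1 - Real.exp (-(c j / 2)))⁻¹ with hW_def
  have hK1 : ∀ j, 1 ≤ K j := fun j => le_max_right _ _
  have hK0 : ∀ j, 0 < K j := fun j => lt_of_lt_of_le one_pos (hK1 j)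
  have hcpos : ∀ j, ¬(γ j / β j = ρ) → 0 < c j := by
    intro j hj
    rw [hc_def]
    dsimp only
    linarith [hγlt j hj]
  have hczero : ∀ j, γ j / β j = ρ → c j = 0 := by
    intro j hj
    rw [hc_def]
    dsimp only
    linarith [hγeq j hj]
  have hW : ∀ j, 0 < W j := by
    intro j
    rw [hW_def]
    dsimp only
    split
    · exact Real.rpow_pos_of_pos (hK0 j) _
    · next hj =>
      have hc := hcpos j hj
      have h1 : Real.exp (-(c j / 2)) < 1 := by
        rw [Real.exp_lt_one_iff]
        exact neg_lt_zero.mpr (half_pos hc)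
      exact mul_pos (Real.exp_pos _) (inv_pos.mpr (by linarith))
  have hC0 : 0 < (1 - Real.exp (-(ρ / (1 + ρ) * (β j0 + γ j0))))⁻¹ := by
    apply inv_pos.mpr
    have h1 : Real.exp (-(ρ / (1 + ρ) * (β j0 + γ j0))) < 1 := by
      rw [Real.exp_lt_one_iff]
      nlinarith [mul_pos hθ0 (ha j0)]
    linarith
  refine ⟨(1 - Real.exp (-(ρ / (1 + ρ) * (β j0 + γ j0))))⁻¹ * ∏ j, W j,
    mul_pos hC0 (Finset.prod_pos fun j _ => hW j), ?_⟩
  intro L hL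
  have hL1 : (0:ℝ) < L + 1 := by linarith
  set q : Fin d → ℝ := fun j => if j = j0 then γ' j0
      else (if γ j / β j = ρ then 1 + γ' j else 0) with hq_def
  have hsumq : ∑ j, q j = ((Finset.univ.filter fun j => γ j / β j = ρ).card : ℝ) - 1
      + ∑ j ∈ Finset.univ.filter (fun j => γ j / β j = ρ), γ' j := by
    have h1 : ∑ j, (if γ j / β j = ρ then 1 + γ' j else 0)
        = ((Finset.univ.filter fun j => γ j / β j = ρ).card : ℝ)
          + ∑ j ∈ Finset.univ.filter (fun j => γ j / β j = ρ), γ' j := by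
      rw [← Finset.sum_filter, Finset.sum_add_distrib, Finset.sum_const]
      simp [nsmul_eq_mul]
    have h2 : ∑ j ∈ Finset.univ.erase j0, q j
        = ∑ j ∈ Finset.univ.erase j0, (if γ j / β j = ρ then 1 + γ' j else 0) := by
      apply Finset.sum_congr rfl
      intro j hjmem
      rw [hq_def]
      dsimp only
      rw [if_neg (Finset.mem_erase.mp hjmem).1]
    have h3 : ∑ j, (if γ j / β j = ρ then 1 + γ' j else 0)
        = (if γ j0 / β j0 = ρ then 1 + γ' j0 else 0)
          + ∑ j ∈ Finset.univ.erase j0, (if γ j / β j = ρ then 1 + γ' j else 0) :=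
      (Finset.add_sum_erase _ _ (Finset.mem_univ j0)).symm
    rw [← Finset.add_sum_erase _ _ (Finset.mem_univ j0), h2]
    have hqj0 : q j0 = γ' j0 := by
      rw [hq_def]; dsimp only; rw [if_pos rfl]
    rw [hqj0]
    rw [if_pos hj0] at h3
    linarith [h1, h3]
  apply tsum_le_of_sum_le'
  · apply le_of_lt
    apply mul_pos (mul_pos (mul_pos hC0 (Finset.prod_pos fun j _ => hW j)) (Real.exp_pos _))
    exact Real.rpow_pos_of_pos hL1 _
  intro s
  have hKbound : ∀ j, L / (β j + γ j) + 1 ≤ K j * (L + 1) := by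
    intro j
    rw [hK_def]
    dsimp only
    have hKa : (β j + γ j)⁻¹ ≤ max (β j + γ j)⁻¹ 1 := le_max_left _ _
    have hK1' : (1:ℝ) ≤ max (β j + γ j)⁻¹ 1 := le_max_right _ _
    have hdiv : L / (β j + γ j) = L * (β j + γ j)⁻¹ := div_eq_mul_inv _ _
    nlinarith [mul_le_mul_of_nonneg_left hKa hL]
  have hB0 : ∀ x : ℕ, (x : ℝ) ≤ L / (β j0 + γ j0) →
      ((x : ℝ) + 1) ^ (γ' j0) ≤ W j0 * (L + 1) ^ (q j0) := by
    intro x hx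
    have hqj0 : q j0 = γ' j0 := by
      rw [hq_def]; dsimp only; rw [if_pos rfl]
    rw [hqj0]
    have hWj0 : W j0 = K j0 ^ (1 + γ' j0) := by
      rw [hW_def]; dsimp only; rw [if_pos hj0]
    rw [hWj0]
    have h1 : (x:ℝ) + 1 ≤ K j0 * (L + 1) := by
      have := hKbound j0
      linarith
    calc ((x:ℝ) + 1) ^ (γ' j0) ≤ (K j0 * (L + 1)) ^ (γ' j0) :=
          Real.rpow_le_rpow (by positivity) h1 (hγ' j0)
      _ = K j0 ^ (γ' j0) * (L + 1) ^ (γ' j0) := Real.mul_rpow (hK0 j0).le hL1.le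
      _ ≤ K j0 ^ (1 + γ' j0) * (L + 1) ^ (γ' j0) := by
          apply mul_le_mul_of_nonneg_right
            (Real.rpow_le_rpow_of_exponent_le (hK1 j0) (by linarith [hγ' j0]))
            (Real.rpow_nonneg hL1.le _)
  have hB : ∀ j, j ≠ j0 →
      ∑ v ∈ Finset.range (⌊L / (β j + γ j)⌋₊ + 1),
        Real.exp ((γ j - ρ / (1 + ρ) * (β j + γ j)) * v) * ((v : ℝ) + 1) ^ (γ' j)
        ≤ W j * (L + 1) ^ (q j) := by
    intro j hjne
    by_cases hj : γ j / β j = ρ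
    · have hc0 : c j = 0 := hczero j hj
      have hgj : γ j - ρ / (1 + ρ) * (β j + γ j) = 0 := by
        rw [hc_def] at hc0
        dsimp only at hc0
        linarith
      have hterm : ∀ v ∈ Finset.range (⌊L / (β j + γ j)⌋₊ + 1),
          Real.exp ((γ j - ρ / (1 + ρ) * (β j + γ j)) * v) * ((v : ℝ) + 1) ^ (γ' j)
            = ((v : ℝ) + 1) ^ (γ' j) := by
        intro v _
        rw [hgj, zero_mul, Real.exp_zero, one_mul]
      rw [Finset.sum_congr rfl hterm]
      have hm : (⌊L / (β j + γ j)⌋₊ : ℝ) ≤ L / (β j + γ j) :=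
        Nat.floor_le (div_nonneg hL (ha j).le)
      have hmK : (⌊L / (β j + γ j)⌋₊ : ℝ) + 1 ≤ K j * (L + 1) := by
        have := hKbound j
        linarith
      have heach : ∀ v ∈ Finset.range (⌊L / (β j + γ j)⌋₊ + 1),
          ((v : ℝ) + 1) ^ (γ' j) ≤ (K j * (L + 1)) ^ (γ' j) := by
        intro v hv
        apply Real.rpow_le_rpow (by positivity) _ (hγ' j)
        have hvm : (v : ℝ) ≤ (⌊L / (β j + γ j)⌋₊ : ℝ) := by
          exact_mod_cast Nat.lt_succ_iff.mp (Finset.mem_range.mp hv)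
        linarith
      calc ∑ v ∈ Finset.range (⌊L / (β j + γ j)⌋₊ + 1), ((v : ℝ) + 1) ^ (γ' j)
          ≤ (Finset.range (⌊L / (β j + γ j)⌋₊ + 1)).card • (K j * (L + 1)) ^ (γ' j) :=
            Finset.sum_le_card_nsmul _ _ _ heach
        _ = ((⌊L / (β j + γ j)⌋₊ : ℝ) + 1) * (K j * (L + 1)) ^ (γ' j) := by
            rw [Finset.card_range, nsmul_eq_mul]
            push_cast
            ring
        _ ≤ (K j * (L + 1)) * (K j * (L + 1)) ^ (γ' j) :=
            mul_le_mul_of_nonneg_right hmK (Real.rpow_nonneg (by positivity) _)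
        _ = (K j * (L + 1)) ^ (1 + γ' j) := by
            rw [Real.rpow_add (by positivity), Real.rpow_one]
        _ = K j ^ (1 + γ' j) * (L + 1) ^ (1 + γ' j) := Real.mul_rpow (hK0 j).le hL1.le
        _ = W j * (L + 1) ^ (q j) := by
            rw [hW_def, hq_def]
            dsimp only
            rw [if_pos hj, if_neg hjne, if_pos hj]
    · have hc := hcpos j hj
      have hε0 : 0 < ε j := by
        rw [hε_def]
        dsimp only
        apply div_pos hc
        nlinarith [hγ' j]
      have hq0 : q j = 0 := by
        rw [hq_def]; dsimp only; rw [if_neg hjne, if_neg hj]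
      rw [hq0, Real.rpow_zero, mul_one]
      have hWj : W j = Real.exp (γ' j * (ε j - Real.log (ε j)))
          * (1 - Real.exp (-(c j / 2)))⁻¹ := by
        rw [hW_def]; dsimp only; rw [if_neg hj]
      rw [hWj]
      have hr1 : Real.exp (-(c j / 2)) < 1 := by
        rw [Real.exp_lt_one_iff]
        exact neg_lt_zero.mpr (half_pos hc)
      have hterm : ∀ v : ℕ,
          Real.exp ((γ j - ρ / (1 + ρ) * (β j + γ j)) * v) * ((v : ℝ) + 1) ^ (γ' j)
            ≤ Real.exp (γ' j * (ε j - Real.log (ε j))) * Real.exp (-(c j / 2)) ^ v := by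
        intro v
        have hlog := log_lin hε0 v
        have hrp : ((v : ℝ) + 1) ^ (γ' j)
            = Real.exp (Real.log ((v : ℝ) + 1) * γ' j) := by
          rw [Real.rpow_def_of_pos (by positivity)]
        rw [hrp, ← Real.exp_add, ← Real.exp_nat_mul, ← Real.exp_add]
        apply Real.exp_le_exp.mpr
        have h1 : γ j - ρ / (1 + ρ) * (β j + γ j) = -c j := by
          rw [hc_def]; dsimp only; ring
        rw [h1]
        have h2 : Real.log ((v : ℝ) + 1) * γ' j ≤ (ε j * v + ε j - Real.log (ε j)) * γ' j :=
          mul_le_mul_of_nonneg_right hlog (hγ' j)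
        have h3 : γ' j * ε j ≤ c j / 2 := by
          rw [hε_def]
          dsimp only
          have hA : 0 < 2 * (γ' j + 1) := by nlinarith [hγ' j]
          rw [mul_div_assoc', div_le_div_iff₀ hA two_pos]
          nlinarith [hγ' j, hc]
        have hv0 : (0:ℝ) ≤ (v : ℝ) := Nat.cast_nonneg v
        nlinarith [h2, mul_le_mul_of_nonneg_right h3 hv0]
      calc ∑ v ∈ Finset.range (⌊L / (β j + γ j)⌋₊ + 1),
            Real.exp ((γ j - ρ / (1 + ρ) * (β j + γ j)) * v) * ((v : ℝ) + 1) ^ (γ' j)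
          ≤ ∑ v ∈ Finset.range (⌊L / (β j + γ j)⌋₊ + 1),
              Real.exp (γ' j * (ε j - Real.log (ε j))) * Real.exp (-(c j / 2)) ^ v :=
            Finset.sum_le_sum fun v _ => hterm v
        _ = Real.exp (γ' j * (ε j - Real.log (ε j)))
              * ∑ v ∈ Finset.range (⌊L / (β j + γ j)⌋₊ + 1), Real.exp (-(c j / 2)) ^ v := by
            rw [← Finset.mul_sum]
        _ ≤ Real.exp (γ' j * (ε j - Real.log (ε j))) * (1 - Real.exp (-(c j / 2)))⁻¹ :=
            mul_le_mul_of_nonneg_left (geom_bound (Real.exp_pos _).le hr1 _)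
              (Real.exp_pos _).le
  have hcore := main_sum_bound (fun j => β j + γ j) γ γ' (ρ / (1 + ρ)) L j0
    (fun j => W j * (L + 1) ^ (q j)) ha hθ0 hγ' hL (hγeq j0 hj0) hB0 hB s
  refine le_trans hcore ?_
  have hprodW : ∏ j, (W j * (L + 1) ^ (q j)) = (∏ j, W j) * (L + 1) ^ (∑ j, q j) := by
    rw [Finset.prod_mul_distrib]
    congr 1
    simp only [Real.rpow_def_of_pos hL1]
    rw [← Real.exp_sum, ← Finset.mul_sum]
  rw [hprodW, hsumq]
  apply le_of_eq
  ring
end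

section
/- (Infinite-dimensional Smolyak algorithm, exponential weights with summability) Let Y be a Banach space and let M be defined on all finitely supported sequences k : ℕ → ℕ (k_j ≥ 1, indices j ≥ 1), with mixed differences (Δ_mix M)(k) := (Δ_1 ∘ ⋯ ∘ Δ_n M)(k) for any n bounding the support of k (this is independent of the choice of n). Assume ‖(Δ_mix M)(k)‖_Y ≤ K₁ ∏_{j≥1} exp(−β_j k_j) for all finitely supported k, with K₁ > 0 and β_j > 0. Suppose there exists β₀ > 1 such that M̃ := Σ_{j=1}^∞ 1/(exp(β_j/β₀) − 1) < ∞. For L > 0 let I_L := {k finitely supported : Σ_{j≥1} β_j k_j ≤ L}, which is a finite set, let N := |I_L|, and let M_∞ := Σ_k (Δ_mix M)(k), the absolutely convergent sum over all finitely supported k. Then ‖S_{I_L}(M) − M_∞‖_Y ≤ (K₁/β₀) exp(β₀ M̃) N^{−(β₀−1)}. -/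
/-- The `j`-th unidirectional difference operator on methods defined on finitely
supported sequences: `(Δ_j M)(k) = M(k) - M(k - e_j)` if `k j > 0`, else `M(k)`. -/
noncomputable def diffOpInf {Y : Type*} [AddCommGroup Y] (j : ℕ) (M : (ℕ →₀ ℕ) → Y) :
    (ℕ →₀ ℕ) → Y :=
  fun k => if k j = 0 then M k else M k - M (k.update j (k j - 1))

/-- The truncated mixed difference operator `Δ_1 ∘ ⋯ ∘ Δ_n`. -/
noncomputable def mixDiffUpTo {Y : Type*} [AddCommGroup Y] (n : ℕ) (M : (ℕ →₀ ℕ) → Y) :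
    (ℕ →₀ ℕ) → Y :=
  (List.range n).foldr (fun j F => diffOpInf j F) M

open Finset

private lemma aux_bernoulli_smolyak18 {β₀ u : ℝ} (hβ₀ : 1 < β₀) (hu : 0 < u) (hu1 : u ≤ 1) :
    β₀ * (u ^ (β₀ - 1) * (1 - u)) ≤ 1 := by
  have hs : (0:ℝ) ≤ (1 - u) / u := div_nonneg (by linarith) hu.le
  have hb := one_add_mul_self_le_rpow_one_add (by linarith : (-1:ℝ) ≤ (1-u)/u) hβ₀.le
  have h1u : 1 + (1 - u) / u = 1 / u := by field_simp; ring
  rw [h1u] at hb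
  have h2 : β₀ * ((1 - u) / u) ≤ (1 / u) ^ β₀ := by nlinarith
  have hupow : (0:ℝ) < u ^ β₀ := Real.rpow_pos_of_pos hu _
  have h3 : u ^ β₀ * (1 / u) ^ β₀ = 1 := by
    rw [← Real.mul_rpow hu.le (by positivity), mul_one_div, div_self hu.ne', Real.one_rpow]
  have h4 : u ^ β₀ * (β₀ * ((1 - u) / u)) = β₀ * (u ^ (β₀ - 1) * (1 - u)) := by
    have : u ^ (β₀ - 1) = u ^ β₀ / u := by
      rw [Real.rpow_sub hu, Real.rpow_one]
    rw [this]; field_simp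
  calc β₀ * (u ^ (β₀ - 1) * (1 - u)) = u ^ β₀ * (β₀ * ((1 - u) / u)) := h4.symm
    _ ≤ u ^ β₀ * (1 / u) ^ β₀ := by
        exact mul_le_mul_of_nonneg_left h2 hupow.le
    _ = 1 := h3

private lemma aux_sum_exp_le_smolyak18 {β : ℕ → ℝ} (hβ : ∀ j, 0 < β j) {β₀ : ℝ} (hβ₀ : 0 < β₀)
    {Mt : ℝ} (hMt : HasSum (fun j : ℕ => 1 / (Real.exp (β j / β₀) - 1)) Mt)
    (S : Finset (ℕ →₀ ℕ)) :
    ∑ k ∈ S, Real.exp (-(∑ j ∈ k.support, β j * (k j : ℝ)) / β₀) ≤ Real.exp Mt := by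
  classical
  set t : ℕ → ℝ := fun j => 1 / (Real.exp (β j / β₀) - 1) with ht
  have htpos : ∀ j, 0 < t j := by
    intro j
    have : (1:ℝ) < Real.exp (β j / β₀) := by
      rw [← Real.exp_zero]
      exact Real.exp_lt_exp.2 (div_pos (hβ j) hβ₀)
    exact div_pos one_pos (by linarith)
  set r : ℕ → ℝ := fun j => Real.exp (-(β j / β₀)) with hr
  have hrpos : ∀ j, 0 < r j := fun j => Real.exp_pos _
  have hrlt : ∀ j, r j < 1 := by
    intro j
    rw [hr]
    calc Real.exp (-(β j / β₀)) < Real.exp 0 :=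
          Real.exp_lt_exp.2 (by simpa using div_pos (hβ j) hβ₀)
      _ = 1 := Real.exp_zero
  -- choose n bounding supports
  set T : Finset ℕ := S.sup Finsupp.support with hT
  set n : ℕ := T.sup id + 1 with hn
  have hsupp : ∀ k ∈ S, (k : ℕ →₀ ℕ).support ⊆ Finset.range n := by
    intro k hk j hj
    have hjT : j ∈ T := Finset.le_sup (f := Finsupp.support) hk hj
    have : j ≤ T.sup id := Finset.le_sup (f := id) hjT
    exact Finset.mem_range.2 (by omega)
  -- choose m bounding values
  set m : ℕ := S.sup (fun k => k.support.sup k) with hm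
  have hval : ∀ k ∈ S, ∀ j, k j ≤ m := by
    intro k hk j
    by_cases h : k j = 0
    · omega
    · have hjs : j ∈ k.support := Finsupp.mem_support_iff.2 h
      calc k j ≤ k.support.sup k := Finset.le_sup hjs
        _ ≤ m := Finset.le_sup (f := fun k => k.support.sup k) hk
  -- rewrite each term as a product over Fin n
  have hterm : ∀ k ∈ S,
      Real.exp (-(∑ j ∈ k.support, β j * (k j : ℝ)) / β₀) = ∏ i : Fin n, r i ^ (k i) := by
    intro k hk
    have hsum : ∑ j ∈ k.support, β j * (k j : ℝ) = ∑ j ∈ Finset.range n, β j * (k j : ℝ) := by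
      refine Finset.sum_subset (hsupp k hk) ?_
      intro j _ hj
      rw [Finsupp.notMem_support_iff.1 hj]; simp
    have hexp : -(∑ j ∈ Finset.range n, β j * (k j : ℝ)) / β₀
        = ∑ j ∈ Finset.range n, (k j : ℝ) * (-(β j / β₀)) := by
      rw [neg_div, Finset.sum_div, ← Finset.sum_neg_distrib]
      exact Finset.sum_congr rfl fun j _ => by ring
    rw [hsum, hexp, Real.exp_sum]
    rw [Finset.prod_congr rfl fun j _ => (Real.exp_nat_mul (-(β j / β₀)) (k j) :
      Real.exp ((k j : ℝ) * -(β j / β₀)) = r j ^ (k j))]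
    exact (Fin.prod_univ_eq_prod_range (fun j => r j ^ (k j)) n).symm
  rw [Finset.sum_congr rfl hterm]
  -- inject into the product box
  set φ : (ℕ →₀ ℕ) → (Fin n → ℕ) := fun k i => k i with hφ
  have hinj : Set.InjOn φ S := by
    intro k hk k' hk' h
    ext j
    by_cases hjn : j < n
    · exact congrFun h ⟨j, hjn⟩
    · have h1 : k j = 0 := by
        by_contra hc
        exact hjn (Finset.mem_range.1 (hsupp k hk (Finsupp.mem_support_iff.2 hc)))
      have h2 : k' j = 0 := by
        by_contra hc
        exact hjn (Finset.mem_range.1 (hsupp k' hk' (Finsupp.mem_support_iff.2 hc)))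
      rw [h1, h2]
  have himage : S.image φ ⊆ Fintype.piFinset (fun _ : Fin n => Finset.range (m + 1)) := by
    intro f hf
    rcases Finset.mem_image.1 hf with ⟨k, hk, rfl⟩
    rw [Fintype.mem_piFinset]
    intro i
    exact Finset.mem_range.2 (Nat.lt_succ_of_le (hval k hk i))
  calc ∑ k ∈ S, ∏ i : Fin n, r i ^ (k i)
      = ∑ f ∈ S.image φ, ∏ i : Fin n, r i ^ (f i) := by
        rw [Finset.sum_image (fun k hk k' hk' h => hinj hk hk' h)]
    _ ≤ ∑ f ∈ Fintype.piFinset (fun _ : Fin n => Finset.range (m + 1)),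
          ∏ i : Fin n, r i ^ (f i) := by
        refine Finset.sum_le_sum_of_subset_of_nonneg himage ?_
        intro f _ _
        exact Finset.prod_nonneg fun i _ => pow_nonneg (hrpos i).le _
    _ = ∏ i : Fin n, ∑ v ∈ Finset.range (m + 1), r i ^ v := by
        rw [Finset.prod_univ_sum]
    _ ≤ ∏ i : Fin n, Real.exp (t i) := by
        refine Finset.prod_le_prod (fun i _ => Finset.sum_nonneg fun v _ =>
          pow_nonneg (hrpos i).le _) (fun i _ => ?_)
        have hgeom : ∑ v ∈ Finset.range (m + 1), r i ^ v ≤ (1 - r i)⁻¹ :=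
          sum_le_hasSum _ (fun v _ => pow_nonneg (hrpos i).le _)
            (hasSum_geometric_of_lt_one (hrpos i).le (hrlt i))
        refine hgeom.trans ?_
        have hE : (1:ℝ) < Real.exp (β i / β₀) := by
          rw [← Real.exp_zero]
          exact Real.exp_lt_exp.2 (div_pos (hβ i) hβ₀)
        have hEne : Real.exp (β i / β₀) - 1 ≠ 0 := by linarith
        have heq : (1 - r i)⁻¹ = t i + 1 := by
          show (1 - Real.exp (-(β (i:ℕ) / β₀)))⁻¹ = 1 / (Real.exp (β (i:ℕ) / β₀) - 1) + 1
          rw [Real.exp_neg]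
          rw [inv_eq_one_div]
          field_simp
          ring
        rw [heq]
        exact Real.add_one_le_exp _
    _ = Real.exp (∑ i : Fin n, t i) := (Real.exp_sum _ _).symm
    _ ≤ Real.exp Mt := by
        refine Real.exp_le_exp.2 ?_
        rw [Fin.sum_univ_eq_sum_range]
        exact sum_le_hasSum _ (fun j _ => (htpos j).le) hMt

/-- infinite-dimensional Smolyak algorithm, exponential weights
with summability: let `D` be the mixed difference function of `M`
(`D k = (Δ_1∘⋯∘Δ_n M)(k)` for every `n` bounding the support of `k`), with
`‖D k‖ ≤ K₁ ∏_j exp(-β_j k_j)`. If `β₀ > 1` and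
`M̃ = ∑_j 1/(exp(β_j/β₀)-1) < ∞`, and `I_L = {k : ∑_j β_j k_j ≤ L}` (a finite
set) has `N` elements, and `M_∞ = ∑_k D k` (absolutely convergent), then
`‖S_{I_L}(M) - M_∞‖ ≤ (K₁/β₀) exp(β₀ M̃) N^{-(β₀-1)}`. -/
theorem smolyak_infinite_dimensional_summable_weights
    {Y : Type*} [NormedAddCommGroup Y] [NormedSpace ℝ Y] [CompleteSpace Y]
    (M D : (ℕ →₀ ℕ) → Y)
    (hD : ∀ (k : ℕ →₀ ℕ) (n : ℕ), (∀ j, n ≤ j → k j = 0) → D k = mixDiffUpTo n M k)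
    (K₁ : ℝ) (hK₁ : 0 < K₁) (β : ℕ → ℝ) (hβ : ∀ j, 0 < β j)
    (hDbound : ∀ k : ℕ →₀ ℕ,
      ‖D k‖ ≤ K₁ * Real.exp (-∑ j ∈ k.support, β j * (k j : ℝ)))
    (β₀ : ℝ) (hβ₀ : 1 < β₀)
    (Mt : ℝ) (hMt : HasSum (fun j : ℕ => 1 / (Real.exp (β j / β₀) - 1)) Mt)
    (Minf : Y) (hMinf : HasSum D Minf)
    (L : ℝ) (hL : 0 < L)
    (hFin : {k : ℕ →₀ ℕ | ∑ j ∈ k.support, β j * (k j : ℝ) ≤ L}.Finite) :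
    ‖(∑ k ∈ hFin.toFinset, D k) - Minf‖ ≤
      K₁ / β₀ * Real.exp (β₀ * Mt) *
        (hFin.toFinset.card : ℝ) ^ (-(β₀ - 1)) := by
  classical
  have hβ₀pos : (0:ℝ) < β₀ := lt_trans one_pos hβ₀
  set I := hFin.toFinset with hIdef
  set w : (ℕ →₀ ℕ) → ℝ := fun k => ∑ j ∈ k.support, β j * (k j : ℝ) with hwdef
  set g : (ℕ →₀ ℕ) → ℝ := fun k => Real.exp (-(w k) / β₀) with hgdef
  have hgpos : ∀ k, 0 < g k := fun k => Real.exp_pos _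
  have hgsumle : ∀ S : Finset (ℕ →₀ ℕ), ∑ k ∈ S, g k ≤ Real.exp Mt := fun S =>
    aux_sum_exp_le_smolyak18 hβ hβ₀pos hMt S
  have hgsummable : Summable g := summable_of_sum_le (fun k => (hgpos k).le) hgsumle
  have hw_nonneg : ∀ k, 0 ≤ w k := fun k =>
    Finset.sum_nonneg fun j _ => mul_nonneg (hβ j).le (Nat.cast_nonneg _)
  have hDle : ∀ k, ‖D k‖ ≤ K₁ * g k := by
    intro k
    refine (hDbound k).trans (mul_le_mul_of_nonneg_left ?_ hK₁.le)
    apply Real.exp_le_exp.2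
    rw [neg_div, neg_le_neg_iff]
    exact div_le_self (hw_nonneg k) hβ₀.le
  have hDnorm : Summable (fun k => ‖D k‖) :=
    Summable.of_nonneg_of_le (fun _ => norm_nonneg _) hDle (hgsummable.mul_left K₁)
  have hDsum : Summable D := Summable.of_norm hDnorm
  set C : Set (ℕ →₀ ℕ) := (↑I : Set (ℕ →₀ ℕ))ᶜ with hCdef
  have hsplitD := Summable.sum_add_tsum_compl (s := I) hDsum
  have heqn : (∑ k ∈ I, D k) - Minf = -(∑' x : C, D ↑x) := by
    rw [← hMinf.tsum_eq, ← hsplitD]; abel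
  rw [heqn, norm_neg]
  have hmemI : ∀ k : ℕ →₀ ℕ, k ∈ I ↔ w k ≤ L := fun k => hFin.mem_toFinset
  have hNpos : 0 < I.card := Finset.card_pos.2 ⟨0, (hmemI 0).2 (by simp [hwdef, hL.le])⟩
  set Nr : ℝ := (I.card : ℝ) with hNrdef
  have hNrpos : 0 < Nr := by rw [hNrdef]; exact Nat.cast_pos.2 hNpos
  set c : ℝ := Real.exp Mt with hcdef
  have hcpos : 0 < c := Real.exp_pos _
  set s₀ : ℝ := Real.exp (-L / β₀) with hs₀def
  have hs₀pos : 0 < s₀ := Real.exp_pos _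
  have hgI : ∀ k ∈ I, s₀ ≤ g k := by
    intro k hk
    apply Real.exp_le_exp.2
    exact (div_le_div_iff_of_pos_right hβ₀pos).2 (neg_le_neg ((hmemI k).1 hk))
  have hcard_le : Nr * s₀ ≤ ∑ k ∈ I, g k := by
    calc Nr * s₀ = ∑ _k ∈ I, s₀ := by rw [Finset.sum_const, nsmul_eq_mul]
      _ ≤ ∑ k ∈ I, g k := Finset.sum_le_sum hgI
  have hsumI_le : ∑ k ∈ I, g k ≤ c := hgsumle I
  have hsplitg := Summable.sum_add_tsum_compl (s := I) hgsummable
  have htail_g : ∑' x : C, g ↑x ≤ c - Nr * s₀ := by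
    have he : ∑' x : C, g ↑x = (∑' k, g k) - ∑ k ∈ I, g k := by rw [← hsplitg]; ring
    have htsum_le : ∑' k, g k ≤ c := Summable.tsum_le_of_sum_le hgsummable hgsumle
    rw [he]; linarith
  set E : ℝ := s₀ ^ (β₀ - 1) with hEdef
  have hEpos : 0 < E := Real.rpow_pos_of_pos hs₀pos _
  have hEeq : E = Real.exp (-L / β₀ * (β₀ - 1)) := (Real.exp_mul (-L / β₀) (β₀ - 1)).symm
  have htermC : ∀ x : C, ‖D ↑x‖ ≤ K₁ * E * g ↑x := by
    rintro ⟨k, hk⟩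
    have hkI : k ∉ I := by simpa [hCdef] using hk
    have hkL : L < w k := lt_of_not_ge fun h => hkI ((hmemI k).2 h)
    refine (hDbound k).trans ?_
    have h1 : Real.exp (-(w k)) = Real.exp (-(w k) * (β₀ - 1) / β₀) * g k := by
      rw [hgdef, ← Real.exp_add]
      congr 1
      field_simp
      ring
    have h2 : Real.exp (-(w k) * (β₀ - 1) / β₀) ≤ E := by
      rw [hEeq]
      apply Real.exp_le_exp.2
      have key : -(w k) * (β₀ - 1) ≤ -L * (β₀ - 1) := by nlinarith
      calc -(w k) * (β₀ - 1) / β₀ ≤ -L * (β₀ - 1) / β₀ := (div_le_div_iff_of_pos_right hβ₀pos).2 key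
        _ = -L / β₀ * (β₀ - 1) := by ring
    calc K₁ * Real.exp (-(w k)) = K₁ * (Real.exp (-(w k) * (β₀ - 1) / β₀) * g k) := by rw [h1]
      _ ≤ K₁ * (E * g k) := by
          refine mul_le_mul_of_nonneg_left ?_ hK₁.le
          exact mul_le_mul_of_nonneg_right h2 (hgpos k).le
      _ = K₁ * E * g k := by ring
  have htail_norm : ∑' x : C, ‖D ↑x‖ ≤ K₁ * E * (∑' x : C, g ↑x) := by
    rw [← tsum_mul_left]
    exact Summable.tsum_le_tsum htermC (hDnorm.subtype _) (((hgsummable.mul_left (K₁ * E)).subtype _))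
  have hnorm_le : ‖∑' x : C, D ↑x‖ ≤ K₁ * E * (c - Nr * s₀) := by
    refine (norm_tsum_le_tsum_norm (hDnorm.subtype _)).trans (htail_norm.trans ?_)
    exact mul_le_mul_of_nonneg_left htail_g (by positivity)
  refine hnorm_le.trans ?_
  -- final numeric estimate
  set u : ℝ := Nr * s₀ / c with hudef
  have hu : 0 < u := by positivity
  have hu1 : u ≤ 1 := (div_le_one hcpos).2 (hcard_le.trans hsumI_le)
  have hbern := aux_bernoulli_smolyak18 hβ₀ hu hu1
  have hucs : u * c = Nr * s₀ := by
    rw [hudef]; field_simp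
  have hs₀eq : s₀ = u * c / Nr := by
    rw [hucs]; field_simp
  have hEeq2 : E = u ^ (β₀ - 1) * c ^ (β₀ - 1) * Nr ^ (-(β₀ - 1)) := by
    rw [hEdef, hs₀eq, Real.div_rpow (mul_pos hu hcpos).le hNrpos.le,
      Real.mul_rpow hu.le hcpos.le, Real.rpow_neg hNrpos.le, div_eq_mul_inv]
  have hcNs : c - Nr * s₀ = c * (1 - u) := by rw [← hucs]; ring
  have hcpow : c ^ (β₀ - 1) * c = Real.exp (β₀ * Mt) := by
    nth_rewrite 2 [← Real.rpow_one c]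
    rw [← Real.rpow_add hcpos, sub_add_cancel, hcdef, ← Real.exp_mul, mul_comm]
  have hfrac : u ^ (β₀ - 1) * (1 - u) ≤ 1 / β₀ := by
    rw [le_div_iff₀ hβ₀pos]; linarith
  calc K₁ * E * (c - Nr * s₀)
      = (u ^ (β₀ - 1) * (1 - u)) * (K₁ * (c ^ (β₀ - 1) * c) * Nr ^ (-(β₀ - 1))) := by
        rw [hEeq2, hcNs]; ring
    _ = (u ^ (β₀ - 1) * (1 - u)) * (K₁ * Real.exp (β₀ * Mt) * Nr ^ (-(β₀ - 1))) := by
        rw [hcpow]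
    _ ≤ (1 / β₀) * (K₁ * Real.exp (β₀ * Mt) * Nr ^ (-(β₀ - 1))) := by
        refine mul_le_mul_of_nonneg_right hfrac ?_
        have : (0:ℝ) < Nr ^ (-(β₀ - 1)) := Real.rpow_pos_of_pos hNrpos _
        exact (mul_pos (mul_pos hK₁ (Real.exp_pos _)) this).le
    _ = K₁ / β₀ * Real.exp (β₀ * Mt) * Nr ^ (-(β₀ - 1)) := by ring
end
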